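/- arXiv:1910.05542 — 7 statements merged into one kernel-verified Lean document; each statement's English description precedes it below -/
import Mathlib

section
/- Let $D$ be a bipartite digraph with partite sets $V_1$ and $V_2$, and let $C_i$ and $C_j$ be two vertex-disjoint directed cycles in $D$. If $C_i$ and $C_j$ cannot be merged into a single directed cycle with vertex set $V(C_i) \cup V(C_j)$, then the number of arcs between $V(C_i)$ and $V(C_j)$ (in both directions) is at most $\frac{|V(C_i)| \cdot |V(C_j)|}{2}$. -/
open Finset

variable {V : Type*}

/-- Cyclic successor of `x` on the cycle represented by list `c`. -/
def cycNext [DecidableEq V] (c : List V) (x : V) : V :=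
  c.getD ((c.idxOf x + 1) % c.length) x

/-- `c` is a directed cycle of the digraph with arc relation `A`. -/
def IsDicycle [DecidableEq V] (A : V → V → Prop) (c : List V) : Prop :=
  2 ≤ c.length ∧ c.Nodup ∧ ∀ x ∈ c, A x (cycNext c x)

/-- The digraph has a hamiltonian (directed) cycle. -/
def IsHamiltonian [DecidableEq V] (A : V → V → Prop) : Prop :=
  ∃ c : List V, IsDicycle A c ∧ ∀ v, v ∈ c

/-- `p` is a hamiltonian directed path. -/
def IsHamDipath (A : V → V → Prop) (p : List V) : Prop :=
  p.Nodup ∧ p.Chain' A ∧ ∀ v, v ∈ p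

/-- The digraph has a hamiltonian directed path. -/
def IsTraceable (A : V → V → Prop) : Prop := ∃ p, IsHamDipath A p

/-- The digraph has a cycle factor: vertex-disjoint dicycles covering all vertices. -/
def HasCycleFactor [DecidableEq V] (A : V → V → Prop) : Prop :=
  ∃ L : List (List V), (∀ c ∈ L, IsDicycle A c) ∧
    L.Pairwise (fun c d => ∀ x ∈ c, x ∉ d) ∧ ∀ v, ∃ c ∈ L, v ∈ c

/-- `V₁, V₂` form a bipartition of the digraph into independent sets. -/
def IsBipartition [DecidableEq V] [Fintype V] (A : V → V → Prop) (V₁ V₂ : Finset V) : Prop :=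
  Disjoint V₁ V₂ ∧ V₁ ∪ V₂ = Finset.univ ∧
    (∀ x ∈ V₁, ∀ y ∈ V₁, ¬ A x y) ∧ (∀ x ∈ V₂, ∀ y ∈ V₂, ¬ A x y)

/-- total degree (out-degree plus in-degree) of `v`. -/
def deg [Fintype V] (A : V → V → Prop) [DecidableRel A] (v : V) : ℕ :=
  (Finset.univ.filter (fun y => A v y)).card + (Finset.univ.filter (fun y => A y v)).card

/-- number of arcs (in both directions) between `v` and the set `X`. -/
def degIn (A : V → V → Prop) [DecidableRel A] (X : Finset V) (v : V) : ℕ :=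
  (X.filter (fun y => A v y)).card + (X.filter (fun y => A y v)).card

/-- total number of arcs between `X` and `Y`, in both directions. -/
def arcsBetween (A : V → V → Prop) [DecidableRel A] (X Y : Finset V) : ℕ :=
  ((X ×ˢ Y).filter (fun p => A p.1 p.2)).card + ((Y ×ˢ X).filter (fun p => A p.1 p.2)).card

/-- strong connectivity. -/
def IsStrong (A : V → V → Prop) : Prop := ∀ u v, Relation.ReflTransGen A u v

/-- `N⁺(S)`: out-neighbourhood of a set. -/
def outNbrs [Fintype V] [DecidableEq V] (A : V → V → Prop) [DecidableRel A]
    (S : Finset V) : Finset V :=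
  Finset.univ.filter (fun y => ∃ v ∈ S, A v y)

/-- a perfect matching from `X` to `Y` using arcs of the digraph. -/
def HasPerfectMatching (A : V → V → Prop) (X Y : Finset V) : Prop :=
  ∃ f : V → V, Set.InjOn f X ∧ ∀ x ∈ X, f x ∈ Y ∧ A x (f x)

/-- a matching from `V₁` to `V₂`: a set of pairwise independent arcs. -/
def IsMatching (A : V → V → Prop) (V₁ V₂ : Finset V) (M : Finset (V × V)) : Prop :=
  (∀ p ∈ M, p.1 ∈ V₁ ∧ p.2 ∈ V₂ ∧ A p.1 p.2) ∧
  (∀ p ∈ M, ∀ q ∈ M, p ≠ q → p.1 ≠ q.1 ∧ p.2 ≠ q.2)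

/-- the digraph (with arc relation `A`) is a member of the family `𝓗₁`,
with partite sets `S ∪ R` and `U ∪ W`. -/
def IsH1 [DecidableEq V] [Fintype V] (A : V → V → Prop) [DecidableRel A] (a : ℕ)
    (S R U W : Finset V) : Prop :=
  Odd a ∧ 3 ≤ a ∧
  Disjoint S R ∧ Disjoint U W ∧ Disjoint (S ∪ R) (U ∪ W) ∧
  S ∪ R ∪ U ∪ W = Finset.univ ∧
  S.card = (a + 1) / 2 ∧ W.card = (a + 1) / 2 ∧
  U.card = (a - 1) / 2 ∧ R.card = (a - 1) / 2 ∧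
  (∀ x ∈ S ∪ R, ∀ y ∈ S ∪ R, ¬ A x y) ∧
  (∀ x ∈ U ∪ W, ∀ y ∈ U ∪ W, ¬ A x y) ∧
  (∀ r ∈ R, ∀ w ∈ W, A r w ∧ A w r) ∧
  (∀ u ∈ U, ∀ s ∈ S, A u s ∧ A s u) ∧
  (∀ w ∈ W, ∀ s ∈ S, A w s) ∧
  (∀ s ∈ S, ∀ w ∈ W, ¬ A s w) ∧
  (∃ u ∈ U, ∃ r ∈ R, A u r) ∧
  (∀ r ∈ R, (a - 3) / 2 ≤ degIn A U r) ∧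
  (∀ u ∈ U, (a - 3) / 2 ≤ degIn A R u)

/-- the digraph (with arc relation `A`) is the digraph `H₃`,
with partite sets `S ∪ R` and `U ∪ W`. -/
def IsH3 [DecidableEq V] [Fintype V] (A : V → V → Prop) [DecidableRel A] (a : ℕ)
    (S R U W : Finset V) : Prop :=
  Even a ∧ 4 ≤ a ∧
  Disjoint S R ∧ Disjoint U W ∧ Disjoint (S ∪ R) (U ∪ W) ∧
  S ∪ R ∪ U ∪ W = Finset.univ ∧
  S.card = (a + 2) / 2 ∧ W.card = (a + 2) / 2 ∧
  U.card = (a - 2) / 2 ∧ R.card = (a - 2) / 2 ∧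
  (∀ x ∈ S ∪ R, ∀ y ∈ S ∪ R, ¬ A x y) ∧
  (∀ x ∈ U ∪ W, ∀ y ∈ U ∪ W, ¬ A x y) ∧
  (∀ r ∈ R, ∀ y ∈ U ∪ W, A r y ∧ A y r) ∧
  (∀ u ∈ U, ∀ x ∈ S ∪ R, A u x ∧ A x u) ∧
  (∀ w ∈ W, ∀ s ∈ S, A w s) ∧
  (∀ s ∈ S, ∀ w ∈ W, ¬ A s w)

/-- the digraph `H₂` on vertices `Fin 6`, where
`x₁ = 0, x₂ = 1, x₃ = 2, y₁ = 3, y₂ = 4, y₃ = 5`. -/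
def H2Adj : Fin 6 → Fin 6 → Prop := fun u v =>
  (u, v) ∈ ([(0,4),(4,2),(2,5),(5,0),(1,4),(4,1),(1,5),(5,1),(3,0),(0,3),(3,2),(2,3)] :
    List (Fin 6 × Fin 6))

instance : DecidableRel H2Adj := fun u v => by unfold H2Adj; infer_instance

section Aux
variable [DecidableEq V]

def cycPrev (c : List V) (x : V) : V :=
  c.getD ((c.idxOf x + (c.length - 1)) % c.length) x

lemma mod_helper {n i : ℕ} (hi : i < n) : ((i + 1) % n + (n - 1)) % n = i := by
  rw [Nat.mod_add_mod]
  have : i + 1 + (n - 1) = i + n := by omega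
  rw [this, Nat.add_mod_right, Nat.mod_eq_of_lt hi]

lemma mod_helper2 {n i : ℕ} (hi : i < n) : ((i + (n - 1)) % n + 1) % n = i := by
  rw [Nat.mod_add_mod]
  have : i + (n - 1) + 1 = i + n := by omega
  rw [this, Nat.add_mod_right, Nat.mod_eq_of_lt hi]

lemma cycNext_getElem {l : List V} (hc : l.Nodup) {i : ℕ} (hi : i < l.length)
    (h2 : (i + 1) % l.length < l.length) :
    cycNext l l[i] = l[(i + 1) % l.length] := by
  unfold cycNext
  rw [List.Nodup.idxOf_getElem hc i hi]
  exact List.getD_eq_getElem _ _ h2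

lemma cycPrev_getElem {l : List V} (hc : l.Nodup) {i : ℕ} (hi : i < l.length)
    (h2 : (i + (l.length - 1)) % l.length < l.length) :
    cycPrev l l[i] = l[(i + (l.length - 1)) % l.length] := by
  unfold cycPrev
  rw [List.Nodup.idxOf_getElem hc i hi]
  exact List.getD_eq_getElem _ _ h2

lemma cycNext_mem {l : List V} (hc : l.Nodup) {x : V} (hx : x ∈ l) : cycNext l x ∈ l := by
  obtain ⟨i, hi, rfl⟩ := List.mem_iff_getElem.1 hx
  rw [cycNext_getElem hc hi (Nat.mod_lt _ (by omega))]
  exact List.getElem_mem _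

lemma cycPrev_mem {l : List V} (hc : l.Nodup) {x : V} (hx : x ∈ l) : cycPrev l x ∈ l := by
  obtain ⟨i, hi, rfl⟩ := List.mem_iff_getElem.1 hx
  rw [cycPrev_getElem hc hi (Nat.mod_lt _ (by omega))]
  exact List.getElem_mem _

lemma cycPrev_cycNext {l : List V} (hc : l.Nodup) {x : V} (hx : x ∈ l) :
    cycPrev l (cycNext l x) = x := by
  obtain ⟨i, hi, rfl⟩ := List.mem_iff_getElem.1 hx
  have hm : (i + 1) % l.length < l.length := Nat.mod_lt _ (by omega)
  have hm2 : ((i + 1) % l.length + (l.length - 1)) % l.length < l.length :=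
    Nat.mod_lt _ (by omega)
  rw [cycNext_getElem hc hi hm, cycPrev_getElem hc hm hm2]
  congr 1
  exact mod_helper hi

lemma cycNext_cycPrev {l : List V} (hc : l.Nodup) {x : V} (hx : x ∈ l) :
    cycNext l (cycPrev l x) = x := by
  obtain ⟨i, hi, rfl⟩ := List.mem_iff_getElem.1 hx
  have hm : (i + (l.length - 1)) % l.length < l.length := Nat.mod_lt _ (by omega)
  have hm2 : ((i + (l.length - 1)) % l.length + 1) % l.length < l.length :=
    Nat.mod_lt _ (by omega)
  rw [cycPrev_getElem hc hi hm, cycNext_getElem hc hm hm2]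
  congr 1
  exact mod_helper2 hi

lemma dicycle_arc {A : V → V → Prop} {l : List V} (h : IsDicycle A l) {i : ℕ}
    (hi : i < l.length) (h2 : (i + 1) % l.length < l.length) :
    A l[i] l[(i + 1) % l.length] := by
  have := h.2.2 l[i] (List.getElem_mem _)
  rwa [cycNext_getElem h.2.1 hi h2] at this

end Aux

section Aux2
variable [DecidableEq V]

lemma isDicycle_of_chain' {A : V → V → Prop} {l : List V} (h2 : 2 ≤ l.length)
    (hnd : l.Nodup) (hch : l.Chain' A) (hne : l ≠ [])
    (hlast : A (l.getLast hne) (l.head hne)) : IsDicycle A l := by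
  refine ⟨h2, hnd, ?_⟩
  intro x hx
  obtain ⟨i, hi, rfl⟩ := List.mem_iff_getElem.1 hx
  have hm : (i + 1) % l.length < l.length := Nat.mod_lt _ (by omega)
  rw [cycNext_getElem hnd hi hm]
  rcases Nat.lt_or_ge (i + 1) l.length with h | h
  · have e : (i + 1) % l.length = i + 1 := Nat.mod_eq_of_lt h
    simp only [e]
    have := List.isChain_iff_getElem.1 hch i (by omega)
    simpa using this
  · have hi1 : i + 1 = l.length := by omega
    have e : (i + 1) % l.length = 0 := by rw [hi1, Nat.mod_self]
    simp only [e]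
    rw [List.getLast_eq_getElem, List.head_eq_getElem_zero] at hlast
    have e2 : l.length - 1 = i := by omega
    simp only [e2] at hlast
    exact hlast

lemma chain'_rotate {A : V → V → Prop} {l : List V} (h : IsDicycle A l) (k : ℕ) :
    (l.rotate k).Chain' A := by
  show List.IsChain A _
  rw [List.isChain_iff_getElem]
  intro i hi
  rw [List.length_rotate] at hi
  have hn : 0 < l.length := by have := h.1; omega
  simp only [List.get_eq_getElem, List.getElem_rotate]
  have e : (i + 1 + k) % l.length = ((i + k) % l.length + 1) % l.length := by
    rw [Nat.mod_add_mod]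
    congr 1
    omega
  simp only [e]
  exact dicycle_arc h (Nat.mod_lt _ hn) (Nat.mod_lt _ hn)

lemma getLast_rotate {l : List V} (hl : 0 < l.length) (k : ℕ) (h : l.rotate k ≠ [])
    (h2 : (l.length - 1 + k) % l.length < l.length) :
    (l.rotate k).getLast h = l[(l.length - 1 + k) % l.length] := by
  rw [List.getLast_eq_getElem]
  simp only [List.getElem_rotate, List.length_rotate]

lemma head_rotate {l : List V} (hl : 0 < l.length) (k : ℕ) (h : l.rotate k ≠ [])
    (h2 : k % l.length < l.length) :
    (l.rotate k).head h = l[k % l.length] := by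
  rw [List.head_eq_getElem_zero]
  simp only [List.getElem_rotate, Nat.zero_add]

end Aux2

section Aux3
variable [DecidableEq V]

lemma merge_cycles {A : V → V → Prop} {c₁ c₂ : List V} (h₁ : IsDicycle A c₁)
    (h₂ : IsDicycle A c₂) (hdisj : ∀ x ∈ c₁, x ∉ c₂) {u w : V} (hu : u ∈ c₁) (hw : w ∈ c₂)
    (ha : A u (cycNext c₂ w)) (hb : A w (cycNext c₁ u)) :
    ∃ L : List V, IsDicycle A L ∧ ∀ v, v ∈ L ↔ v ∈ c₁ ∨ v ∈ c₂ := by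
  have hn : 0 < c₁.length := by have := h₁.1; omega
  have hm : 0 < c₂.length := by have := h₂.1; omega
  obtain ⟨i, hi, rfl⟩ := List.mem_iff_getElem.1 hu
  obtain ⟨j, hj, rfl⟩ := List.mem_iff_getElem.1 hw
  set r₁ := c₁.rotate (i + 1) with hr₁
  set r₂ := c₂.rotate (j + 1) with hr₂
  have hne₁ : r₁ ≠ [] := by
    apply List.ne_nil_of_length_pos; rw [hr₁, List.length_rotate]; exact hn
  have hne₂ : r₂ ≠ [] := by
    apply List.ne_nil_of_length_pos; rw [hr₂, List.length_rotate]; exact hm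
  have hlast₁ : r₁.getLast hne₁ = c₁[i] := by
    rw [getLast_rotate hn _ hne₁ (Nat.mod_lt _ hn)]
    have e : (c₁.length - 1 + (i + 1)) % c₁.length = i := by
      have : c₁.length - 1 + (i + 1) = i + c₁.length := by omega
      rw [this, Nat.add_mod_right, Nat.mod_eq_of_lt hi]
    simp only [e]
  have hlast₂ : r₂.getLast hne₂ = c₂[j] := by
    rw [getLast_rotate hm _ hne₂ (Nat.mod_lt _ hm)]
    have e : (c₂.length - 1 + (j + 1)) % c₂.length = j := by
      have : c₂.length - 1 + (j + 1) = j + c₂.length := by omega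
      rw [this, Nat.add_mod_right, Nat.mod_eq_of_lt hj]
    simp only [e]
  have hhead₁ : r₁.head hne₁ = cycNext c₁ c₁[i] := by
    rw [head_rotate hn _ hne₁ (Nat.mod_lt _ hn), cycNext_getElem h₁.2.1 hi (Nat.mod_lt _ hn)]
  have hhead₂ : r₂.head hne₂ = cycNext c₂ c₂[j] := by
    rw [head_rotate hm _ hne₂ (Nat.mod_lt _ hm), cycNext_getElem h₂.2.1 hj (Nat.mod_lt _ hm)]
  refine ⟨r₁ ++ r₂, ?_, ?_⟩
  · have hneL : r₁ ++ r₂ ≠ [] := fun h => hne₁ (by simpa using congrArg (·.take r₁.length) h)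
    apply isDicycle_of_chain' (hne := hneL)
    · rw [List.length_append, hr₁, hr₂, List.length_rotate, List.length_rotate]; omega
    · refine List.Nodup.append ?_ ?_ ?_
      · rw [hr₁]; exact List.nodup_rotate.2 h₁.2.1
      · rw [hr₂]; exact List.nodup_rotate.2 h₂.2.1
      · intro a ha1 ha2
        exact hdisj a (by rw [hr₁] at ha1; exact List.mem_rotate.1 ha1)
          (by rw [hr₂] at ha2; exact List.mem_rotate.1 ha2)
    · show List.IsChain A _
      rw [List.isChain_append]
      refine ⟨chain'_rotate h₁ _, chain'_rotate h₂ _, ?_⟩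
      intro x hx y hy
      rw [List.getLast?_eq_getLast_of_ne_nil hne₁, Option.mem_some_iff] at hx
      rw [List.head?_eq_head hne₂, Option.mem_some_iff] at hy
      subst hx; subst hy
      rw [hlast₁, hhead₂]
      exact ha
    · have e1 : (r₁ ++ r₂).getLast _ = r₂.getLast hne₂ := List.getLast_append_of_ne_nil hneL hne₂
      have e2 : (r₁ ++ r₂).head hneL = r₁.head hne₁ := List.head_append_of_ne_nil (w₁ := hneL) hne₁
      rw [e1, e2, hlast₂, hhead₁]
      exact hb
  · intro v
    simp only [List.mem_append, hr₁, hr₂, List.mem_rotate]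

end Aux3

section Aux4
variable [DecidableEq V] [Fintype V]

lemma opp_parts {A : V → V → Prop} {V₁ V₂ : Finset V} (hbip : IsBipartition A V₁ V₂)
    {x y : V} (hA : A x y) : (x ∈ V₁ ∧ y ∈ V₂) ∨ (x ∈ V₂ ∧ y ∈ V₁) := by
  have hx : x ∈ V₁ ∨ x ∈ V₂ := by
    have := Finset.mem_univ x; rw [← hbip.2.1] at this; exact Finset.mem_union.1 this
  have hy : y ∈ V₁ ∨ y ∈ V₂ := by
    have := Finset.mem_univ y; rw [← hbip.2.1] at this; exact Finset.mem_union.1 this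
  rcases hx with h1 | h1 <;> rcases hy with h2 | h2
  · exact absurd hA (hbip.2.2.1 x h1 y h2)
  · exact Or.inl ⟨h1, h2⟩
  · exact Or.inr ⟨h1, h2⟩
  · exact absurd hA (hbip.2.2.2 x h1 y h2)

lemma half_card {A : V → V → Prop} {V₁ V₂ : Finset V} (hbip : IsBipartition A V₁ V₂)
    {l : List V} (h : IsDicycle A l) :
    (l.toFinset ∩ V₁).card = (l.toFinset ∩ V₂).card := by
  have hnd := h.2.1
  refine Finset.card_bij' (fun x _ => cycNext l x) (fun y _ => cycPrev l y) ?_ ?_ ?_ ?_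
  · intro x hx
    rw [Finset.mem_inter, List.mem_toFinset] at hx ⊢
    have harc := h.2.2 x hx.1
    rcases opp_parts hbip harc with ⟨_, h2⟩ | ⟨h1, _⟩
    · exact ⟨cycNext_mem hnd hx.1, h2⟩
    · exact absurd hx.2 (Finset.disjoint_right.1 hbip.1 h1)
  · intro y hy
    rw [Finset.mem_inter, List.mem_toFinset] at hy ⊢
    have hp := cycPrev_mem hnd hy.1
    have harc := h.2.2 _ hp
    rw [cycNext_cycPrev hnd hy.1] at harc
    rcases opp_parts hbip harc with ⟨h1, _⟩ | ⟨_, h2⟩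
    · exact ⟨hp, h1⟩
    · exact absurd hy.2 (Finset.disjoint_left.1 hbip.1 h2)
  · intro x hx
    rw [Finset.mem_inter, List.mem_toFinset] at hx
    exact cycPrev_cycNext hnd hx.1
  · intro y hy
    rw [Finset.mem_inter, List.mem_toFinset] at hy
    exact cycNext_cycPrev hnd hy.1

lemma countA {A : V → V → Prop} [DecidableRel A] {c₂ : List V} (h₂ : IsDicycle A c₂)
    (X : Finset V) :
    ((X ×ˢ c₂.toFinset).filter fun p => A p.1 (cycNext c₂ p.2)).card
      = ((X ×ˢ c₂.toFinset).filter fun p => A p.1 p.2).card := by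
  have hnd := h₂.2.1
  refine Finset.card_bij' (fun p _ => (p.1, cycNext c₂ p.2)) (fun p _ => (p.1, cycPrev c₂ p.2)) ?_ ?_ ?_ ?_
  · rintro ⟨u, w⟩ hp
    simp only [Finset.mem_filter, Finset.mem_product, List.mem_toFinset] at hp ⊢
    exact ⟨⟨hp.1.1, cycNext_mem hnd hp.1.2⟩, hp.2⟩
  · rintro ⟨u, v⟩ hp
    simp only [Finset.mem_filter, Finset.mem_product, List.mem_toFinset] at hp ⊢
    refine ⟨⟨hp.1.1, cycPrev_mem hnd hp.1.2⟩, ?_⟩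
    rw [cycNext_cycPrev hnd hp.1.2]
    exact hp.2
  · rintro ⟨u, w⟩ hp
    simp only [Finset.mem_filter, Finset.mem_product, List.mem_toFinset] at hp
    simp [cycPrev_cycNext hnd hp.1.2]
  · rintro ⟨u, v⟩ hp
    simp only [Finset.mem_filter, Finset.mem_product, List.mem_toFinset] at hp
    simp [cycNext_cycPrev hnd hp.1.2]

lemma countB {A : V → V → Prop} [DecidableRel A] {c₁ : List V} (h₁ : IsDicycle A c₁)
    (Y : Finset V) :
    ((c₁.toFinset ×ˢ Y).filter fun p => A p.2 (cycNext c₁ p.1)).card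
      = ((Y ×ˢ c₁.toFinset).filter fun p => A p.1 p.2).card := by
  have hnd := h₁.2.1
  refine Finset.card_bij' (fun p _ => (p.2, cycNext c₁ p.1)) (fun q _ => (cycPrev c₁ q.2, q.1)) ?_ ?_ ?_ ?_
  · rintro ⟨u, w⟩ hp
    simp only [Finset.mem_filter, Finset.mem_product, List.mem_toFinset] at hp ⊢
    exact ⟨⟨hp.1.2, cycNext_mem hnd hp.1.1⟩, hp.2⟩
  · rintro ⟨v, u⟩ hp
    simp only [Finset.mem_filter, Finset.mem_product, List.mem_toFinset] at hp ⊢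
    refine ⟨⟨cycPrev_mem hnd hp.1.2, hp.1.1⟩, ?_⟩
    rw [cycNext_cycPrev hnd hp.1.2]
    exact hp.2
  · rintro ⟨u, w⟩ hp
    simp only [Finset.mem_filter, Finset.mem_product, List.mem_toFinset] at hp
    simp [cycPrev_cycNext hnd hp.1.1]
  · rintro ⟨v, u⟩ hp
    simp only [Finset.mem_filter, Finset.mem_product, List.mem_toFinset] at hp
    simp [cycNext_cycPrev hnd hp.1.2]

end Aux4


theorem stmt3 {V : Type*} [DecidableEq V] [Fintype V] (A : V → V → Prop) [DecidableRel A]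
    (V₁ V₂ : Finset V) (hbip : IsBipartition A V₁ V₂)
    (c₁ c₂ : List V) (h₁ : IsDicycle A c₁) (h₂ : IsDicycle A c₂)
    (hdisj : ∀ x ∈ c₁, x ∉ c₂)
    (hnomerge : ¬ ∃ c : List V, IsDicycle A c ∧ ∀ v, v ∈ c ↔ v ∈ c₁ ∨ v ∈ c₂) :
    2 * arcsBetween A c₁.toFinset c₂.toFinset ≤ c₁.length * c₂.length := by
  classical
  set X := c₁.toFinset with hX
  set Y := c₂.toFinset with hY
  set T1 := (X ×ˢ Y).filter (fun p => A p.1 (cycNext c₂ p.2)) with hT1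
  set T2 := (X ×ˢ Y).filter (fun p => A p.2 (cycNext c₁ p.1)) with hT2
  have hdisjT : Disjoint T1 T2 := by
    rw [Finset.disjoint_left]
    rintro ⟨u, w⟩ ha hb
    simp only [hT1, hT2, Finset.mem_filter, Finset.mem_product, hX, hY,
      List.mem_toFinset] at ha hb
    exact hnomerge (merge_cycles h₁ h₂ hdisj ha.1.1 ha.1.2 ha.2 hb.2)
  set SP := (X ×ˢ Y).filter (fun p => (p.1 ∈ V₁ ∧ p.2 ∈ V₁) ∨ (p.1 ∈ V₂ ∧ p.2 ∈ V₂)) with hSP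
  have hsub : T1 ∪ T2 ⊆ SP := by
    rintro ⟨u, w⟩ hp
    rw [Finset.mem_union] at hp
    simp only [hSP, Finset.mem_filter, Finset.mem_product]
    rcases hp with hp | hp
    · simp only [hT1, Finset.mem_filter, Finset.mem_product, hX, hY,
        List.mem_toFinset] at hp
      refine ⟨⟨by simp [hX, hp.1.1], by simp [hY, hp.1.2]⟩, ?_⟩
      have harc2 := h₂.2.2 w hp.1.2
      rcases opp_parts hbip hp.2 with ⟨hu1, hn2⟩ | ⟨hu2, hn1⟩
      · rcases opp_parts hbip harc2 with ⟨hw1, _⟩ | ⟨_, hn1⟩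
        · exact Or.inl ⟨hu1, hw1⟩
        · exact absurd hn2 (Finset.disjoint_left.1 hbip.1 hn1)
      · rcases opp_parts hbip harc2 with ⟨_, hn2⟩ | ⟨hw2, _⟩
        · exact absurd hn2 (Finset.disjoint_left.1 hbip.1 hn1)
        · exact Or.inr ⟨hu2, hw2⟩
    · simp only [hT2, Finset.mem_filter, Finset.mem_product, hX, hY,
        List.mem_toFinset] at hp
      refine ⟨⟨by simp [hX, hp.1.1], by simp [hY, hp.1.2]⟩, ?_⟩
      have harc1 := h₁.2.2 u hp.1.1
      rcases opp_parts hbip hp.2 with ⟨hw1, hn2⟩ | ⟨hw2, hn1⟩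
      · rcases opp_parts hbip harc1 with ⟨hu1, _⟩ | ⟨_, hn1⟩
        · exact Or.inl ⟨hu1, hw1⟩
        · exact absurd hn2 (Finset.disjoint_left.1 hbip.1 hn1)
      · rcases opp_parts hbip harc1 with ⟨_, hn2⟩ | ⟨hu2, _⟩
        · exact absurd hn2 (Finset.disjoint_left.1 hbip.1 hn1)
        · exact Or.inr ⟨hu2, hw2⟩
  have hSPeq : SP = ((X ∩ V₁) ×ˢ (Y ∩ V₁)) ∪ ((X ∩ V₂) ×ˢ (Y ∩ V₂)) := by
    ext ⟨u, w⟩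
    simp only [hSP, Finset.mem_filter, Finset.mem_product, Finset.mem_union, Finset.mem_inter]
    tauto
  have hSPd : Disjoint ((X ∩ V₁) ×ˢ (Y ∩ V₁)) ((X ∩ V₂) ×ˢ (Y ∩ V₂)) := by
    rw [Finset.disjoint_left]
    rintro ⟨u, w⟩ ha hb
    rw [Finset.mem_product, Finset.mem_inter, Finset.mem_inter] at ha hb
    exact absurd ha.1.2 (Finset.disjoint_right.1 hbip.1 hb.1.2)
  have hSPcard : SP.card = (X ∩ V₁).card * (Y ∩ V₁).card + (X ∩ V₂).card * (Y ∩ V₂).card := by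
    rw [hSPeq, Finset.card_union_of_disjoint hSPd, Finset.card_product, Finset.card_product]
  have hhalf1 : (X ∩ V₁).card = (X ∩ V₂).card := half_card hbip h₁
  have hhalf2 : (Y ∩ V₁).card = (Y ∩ V₂).card := half_card hbip h₂
  have hXsplit : (X ∩ V₁).card + (X ∩ V₂).card = c₁.length := by
    rw [← Finset.card_union_of_disjoint
      (Finset.disjoint_of_subset_left Finset.inter_subset_right
        (Finset.disjoint_of_subset_right Finset.inter_subset_right hbip.1))]
    rw [← Finset.inter_union_distrib_left, hbip.2.1, Finset.inter_univ]
    exact List.toFinset_card_of_nodup h₁.2.1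
  have hYsplit : (Y ∩ V₁).card + (Y ∩ V₂).card = c₂.length := by
    rw [← Finset.card_union_of_disjoint
      (Finset.disjoint_of_subset_left Finset.inter_subset_right
        (Finset.disjoint_of_subset_right Finset.inter_subset_right hbip.1))]
    rw [← Finset.inter_union_distrib_left, hbip.2.1, Finset.inter_univ]
    exact List.toFinset_card_of_nodup h₂.2.1
  have harcs : arcsBetween A X Y = T1.card + T2.card := by
    rw [arcsBetween, ← countA h₂ X, ← countB h₁ Y]
  have hle : T1.card + T2.card ≤ SP.card := by
    rw [← Finset.card_union_of_disjoint hdisjT]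
    exact Finset.card_le_card hsub
  rw [harcs]
  calc 2 * (T1.card + T2.card) ≤ 2 * SP.card := by omega
    _ = 2 * ((X ∩ V₁).card * (Y ∩ V₁).card + (X ∩ V₂).card * (Y ∩ V₂).card) := by rw [hSPcard]
    _ = ((X ∩ V₁).card + (X ∩ V₂).card) * ((Y ∩ V₁).card + (Y ∩ V₂).card) := by
        rw [← hhalf1, ← hhalf2]; ring
    _ = c₁.length * c₂.length := by rw [hXsplit, hYsplit]
end

section
/- Let $D$ be a strong balanced bipartite digraph of order $2a$ with partite sets $V_1, V_2$, where $a \ge 2$. Suppose $d(u) + d(v) \ge 3a - 1$ for all pairs of non-adjacent vertices $u, v$. If there is a nonempty set $S \subseteq V_1$ with $|N^+(S)| < |S|$, then $a$ is odd, $|S| = \frac{a+1}{2}$, and $|N^+(S)| = \frac{a-1}{2}$. -/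
open Finset

variable {V : Type*}

theorem stmt6 {V : Type*} [DecidableEq V] [Fintype V] (A : V → V → Prop) [DecidableRel A]
    (V₁ V₂ : Finset V) (a : ℕ) (ha : 2 ≤ a)
    (hbip : IsBipartition A V₁ V₂) (h1 : V₁.card = a) (h2 : V₂.card = a)
    (hstrong : IsStrong A)
    (hdeg : ∀ u v, u ≠ v → ¬ A u v → ¬ A v u → 3 * a - 1 ≤ deg A u + deg A v)
    (S : Finset V) (hS : S ⊆ V₁) (hSne : S.Nonempty)
    (hlt : (outNbrs A S).card < S.card) :
    Odd a ∧ S.card = (a + 1) / 2 ∧ (outNbrs A S).card = (a - 1) / 2 := by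
  obtain ⟨hdisj, huniv, hV1, hV2⟩ := hbip
  set T := outNbrs A S with hT
  have hmem : ∀ v : V, v ∈ V₁ ∨ v ∈ V₂ := by
    intro v
    have : v ∈ V₁ ∪ V₂ := by rw [huniv]; exact mem_univ v
    simpa using this
  have hTsub : T ⊆ V₂ := by
    intro y hy
    simp only [hT, outNbrs, mem_filter] at hy
    obtain ⟨-, v, hv, hav⟩ := hy
    rcases hmem y with h | h
    · exact absurd hav (hV1 v (hS hv) y h)
    · exact h
  have hcard2 : 2 ≤ Fintype.card V := by
    have hu : (V₁ ∪ V₂).card = 2 * a := by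
      rw [card_union_of_disjoint hdisj, h1, h2]; ring
    rw [huniv] at hu
    simp only [Finset.card_univ] at hu
    omega
  have hout : ∀ v : V, ∃ y, A v y := by
    intro v
    obtain ⟨u, hu⟩ := Fintype.exists_ne_of_one_lt_card (by omega) v
    rcases (hstrong v u).cases_head with h | ⟨c, hc, -⟩
    · exact absurd h.symm hu
    · exact ⟨c, hc⟩
  have hin : ∀ v : V, ∃ y, A y v := by
    intro v
    obtain ⟨u, hu⟩ := Fintype.exists_ne_of_one_lt_card (by omega) v
    rcases (hstrong u v).cases_tail with h | ⟨c, -, hc⟩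
    · exact absurd h hu.symm
    · exact ⟨c, hc⟩
  have hdegS : ∀ u ∈ S, deg A u ≤ T.card + a := by
    intro u hu
    unfold deg
    have h1' : univ.filter (fun y => A u y) ⊆ T := by
      intro y hy; simp only [mem_filter] at hy
      simp only [hT, outNbrs, mem_filter]
      exact ⟨mem_univ y, u, hu, hy.2⟩
    have h2' : univ.filter (fun y => A y u) ⊆ V₂ := by
      intro y hy; simp only [mem_filter] at hy
      rcases hmem y with h | h
      · exact absurd hy.2 (hV1 y h u (hS hu))
      · exact h
    calc _ ≤ T.card + V₂.card := Nat.add_le_add (card_le_card h1') (card_le_card h2')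
    _ = T.card + a := by rw [h2]
  have hdegW : ∀ w ∈ V₂ \ T, deg A w ≤ a + (a - S.card) := by
    intro w hw
    simp only [mem_sdiff] at hw
    unfold deg
    have h1' : univ.filter (fun y => A w y) ⊆ V₁ := by
      intro y hy; simp only [mem_filter] at hy
      rcases hmem y with h | h
      · exact h
      · exact absurd hy.2 (hV2 w hw.1 y h)
    have h2' : univ.filter (fun y => A y w) ⊆ V₁ \ S := by
      intro y hy; simp only [mem_filter] at hy
      simp only [mem_sdiff]
      have hy1 : y ∈ V₁ := by
        rcases hmem y with h | h
        · exact h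
        · exact absurd hy.2 (hV2 y h w hw.1)
      refine ⟨hy1, fun hyS => hw.2 ?_⟩
      simp only [hT, outNbrs, mem_filter]
      exact ⟨mem_univ w, y, hyS, hy.2⟩
    have hcs : (V₁ \ S).card = a - S.card := by rw [card_sdiff_of_subset hS, h1]
    calc _ ≤ V₁.card + (V₁ \ S).card := Nat.add_le_add (card_le_card h1') (card_le_card h2')
    _ = a + (a - S.card) := by rw [h1, hcs]
  have hsa : S.card ≤ a := h1 ▸ card_le_card hS
  have hTa : T.card ≤ a := h2 ▸ card_le_card hTsub
  have hWcard : (V₂ \ T).card = a - T.card := by rw [card_sdiff_of_subset hTsub, h2]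
  obtain ⟨u0, hu0⟩ := hSne
  obtain ⟨y0, hy0⟩ := hout u0
  have hTne : 1 ≤ T.card := by
    refine card_pos.mpr ⟨y0, ?_⟩
    simp only [hT, outNbrs, mem_filter]
    exact ⟨mem_univ _, u0, hu0, hy0⟩
  have hs2 : 2 ≤ S.card := by omega
  obtain ⟨u1, hu1, u2, hu2, hne⟩ := Finset.one_lt_card.mp hs2
  have hA1 : 3 * a - 1 ≤ 2 * (T.card + a) := by
    have hd := hdeg u1 u2 hne (hV1 u1 (hS hu1) u2 (hS hu2)) (hV1 u2 (hS hu2) u1 (hS hu1))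
    have b1 := hdegS u1 hu1
    have b2 := hdegS u2 hu2
    omega
  by_cases hW2 : 2 ≤ (V₂ \ T).card
  · obtain ⟨w1, hw1, w2, hw2, hwne⟩ := Finset.one_lt_card.mp hW2
    have hw1' := (mem_sdiff.mp hw1).1
    have hw2' := (mem_sdiff.mp hw2).1
    have hA2 : 3 * a - 1 ≤ 2 * (a + (a - S.card)) := by
      have hd := hdeg w1 w2 hwne (hV2 w1 hw1' w2 hw2') (hV2 w2 hw2' w1 hw1')
      have b1 := hdegW w1 hw1
      have b2 := hdegW w2 hw2
      omega
    exact ⟨⟨T.card, by omega⟩, by omega, by omega⟩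
  · exfalso
    have hsA : S.card = a := by omega
    have hSeq : S = V₁ := eq_of_subset_of_card_le hS (by omega)
    obtain ⟨w, hw⟩ := card_pos.mp (by omega : 0 < (V₂ \ T).card)
    obtain ⟨c, hc⟩ := hin w
    have hwV2 := (mem_sdiff.mp hw).1
    have hcV1 : c ∈ V₁ := by
      rcases hmem c with h | h
      · exact h
      · exact absurd hc (hV2 c h w hwV2)
    have hwT : w ∈ T := by
      simp only [hT, outNbrs, mem_filter]
      exact ⟨mem_univ w, c, hSeq ▸ hcV1, hc⟩
    exact (mem_sdiff.mp hw).2 hwT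
end

section
/- Let $D$ be a strong balanced bipartite digraph of order $2a$, $a \ge 2$, satisfying $d(u)+d(v) \ge 3a-1$ for all pairs of non-adjacent vertices $u,v$. Then either $D$ contains a cycle factor, or $a$ is odd and $D$ is isomorphic to a digraph in the family $\mathcal{H}_1$. -/
open Finset

variable {V : Type*}

lemma orbit_spec [DecidableEq V] (f : V → V) (hinj : Function.Injective f) (v : V)
    (hper : v ∈ Function.periodicPts f) (hne : ∀ x, f x ≠ x) :
    ∃ c : List V, 2 ≤ c.length ∧ c.Nodup ∧ (∀ x ∈ c, cycNext c x = f x) ∧ v ∈ c ∧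
      (∀ x ∈ c, ∃ i, f^[i] v = x) ∧ (∀ x ∈ c, f x ∈ c) ∧ (∀ x, f x ∈ c → x ∈ c) := by
  classical
  set n := Function.minimalPeriod f v with hn
  have hnpos : 0 < n := Function.minimalPeriod_pos_of_mem_periodicPts hper
  have hit : f^[n] v = v := Function.iterate_minimalPeriod
  have hn1 : n ≠ 1 := by
    intro h
    apply hne v
    have := hit
    rw [h] at this
    simpa using this
  have h2n : 2 ≤ n := by omega
  have hinjOn := Function.iterate_injOn_Iio_minimalPeriod (f := f) (x := v)
  set c : List V := (List.range n).map (f^[·] v) with hc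
  have hlen : c.length = n := by simp [hc]
  have hmemc : ∀ x, x ∈ c ↔ ∃ i, i < n ∧ f^[i] v = x := by
    intro x; simp [hc, List.mem_map, eq_comm]
  have hnodup : c.Nodup := by
    refine List.Nodup.map_on ?_ List.nodup_range
    intro i hi j hj hij
    exact hinjOn (by simpa using List.mem_range.mp hi) (by simpa using List.mem_range.mp hj) hij
  have hget : ∀ (i : ℕ) (h : i < c.length), getElem c i h = f^[i] v := by
    intro i h; simp [hc]
  have hnext : ∀ x ∈ c, cycNext c x = f x := by
    intro x hx
    obtain ⟨i, hi, rfl⟩ := (hmemc x).mp hx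
    have hidx : c.idxOf (f^[i] v) = i := by
      have hi' : i < c.length := by rw [hlen]; omega
      have := List.Nodup.idxOf_getElem hnodup i hi'
      rwa [hget i hi'] at this
    have hj : (i + 1) % n < n := Nat.mod_lt _ hnpos
    rw [cycNext, hidx, hlen, List.getD_eq_getElem _ _ (by rw [hlen]; omega), hget _ (by rw [hlen]; omega)]
    have hs : f (f^[i] v) = f^[i + 1] v := (Function.iterate_succ_apply' f i v).symm
    rcases eq_or_lt_of_le (Nat.succ_le_of_lt hi) with h | h
    · rw [Nat.succ_eq_add_one] at h
      rw [h, Nat.mod_self, hs, h, hit]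
      simp
    · rw [Nat.mod_eq_of_lt h, hs]
  have hvmem : v ∈ c := (hmemc v).mpr ⟨0, hnpos, rfl⟩
  refine ⟨c, by omega, hnodup, hnext, hvmem, ?_, ?_, ?_⟩
  · intro x hx; obtain ⟨i, _, rfl⟩ := (hmemc x).mp hx; exact ⟨i, rfl⟩
  · intro x hx
    obtain ⟨i, hi, rfl⟩ := (hmemc x).mp hx
    have hs : f (f^[i] v) = f^[i + 1] v := (Function.iterate_succ_apply' f i v).symm
    rw [hs]
    rcases eq_or_lt_of_le (Nat.succ_le_of_lt hi) with h | h
    · rw [Nat.succ_eq_add_one] at h; rw [h, hit]; exact hvmem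
    · exact (hmemc _).mpr ⟨i + 1, h, rfl⟩
  · intro x hx
    obtain ⟨i, hi, hfx⟩ := (hmemc (f x)).mp hx
    rcases Nat.eq_zero_or_pos i with rfl | hpos
    · have : f (f^[n - 1] v) = f x := by
        rw [(Function.iterate_succ_apply' f (n-1) v).symm]
        have h9 : n - 1 + 1 = n := by omega
        rw [Nat.succ_eq_add_one, h9, hit]; exact hfx
      have := hinj this
      exact (hmemc x).mpr ⟨n - 1, by omega, this⟩
    · have : f (f^[i - 1] v) = f x := by
        rw [(Function.iterate_succ_apply' f (i-1) v).symm]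
        have h' : i - 1 + 1 = i := by omega
        rw [Nat.succ_eq_add_one, h']; exact hfx
      exact (hmemc x).mpr ⟨i - 1, by omega, hinj this⟩

lemma hasCycleFactor_of_succ [DecidableEq V] [Fintype V] (A : V → V → Prop)
    (f : V → V) (hinj : Function.Injective f) (harc : ∀ v, A v (f v)) (hne : ∀ v, f v ≠ v) :
    HasCycleFactor A := by
  classical
  have hbij : Function.Bijective f := Finite.injective_iff_bijective.mp hinj
  set σ : Equiv.Perm V := Equiv.ofBijective f hbij with hσ
  have hσf : ∀ v, σ v = f v := fun v => rfl
  have hper : ∀ v : V, v ∈ Function.periodicPts f := by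
    intro v
    refine ⟨orderOf σ, orderOf_pos σ, ?_⟩
    show f^[orderOf σ] v = v
    have h1 : (⇑σ)^[orderOf σ] v = v := by
      rw [← Equiv.Perm.coe_pow, pow_orderOf_eq_one]; rfl
    exact h1
  have main : ∀ (m : ℕ) (F : Finset V), F.card ≤ m → (∀ x ∈ F, f x ∈ F) →
      ∃ L : List (List V), (∀ c ∈ L, IsDicycle A c) ∧
        L.Pairwise (fun c d => ∀ x ∈ c, x ∉ d) ∧ (∀ v ∈ F, ∃ c ∈ L, v ∈ c) ∧
        (∀ c ∈ L, ∀ x ∈ c, x ∈ F) := by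
    intro m
    induction m with
    | zero =>
      intro F hF _
      refine ⟨[], by simp, by simp, ?_, by simp⟩
      intro v hv
      rw [Finset.card_eq_zero.mp (Nat.le_zero.mp hF)] at hv
      exact absurd hv (Finset.notMem_empty v)
    | succ m ih =>
      intro F hcard hclose
      rcases F.eq_empty_or_nonempty with rfl | ⟨v, hv⟩
      · exact ⟨[], by simp, by simp, by simp, by simp⟩
      obtain ⟨c, hlen, hnodup, hnext, hvc, horb, hfwd, hbwd⟩ :=
        orbit_spec f hinj v (hper v) hne
      have hiter : ∀ i, f^[i] v ∈ F := by
        intro i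
        induction i with
        | zero => exact hv
        | succ i ih2 =>
          rw [Function.iterate_succ_apply']
          exact hclose _ ih2
      have hcF : ∀ x ∈ c, x ∈ F := by
        intro x hx
        obtain ⟨i, rfl⟩ := horb x hx
        exact hiter i
      set F' : Finset V := F.filter (fun x => x ∉ c) with hF'
      have hsubF : F' ⊆ F := Finset.filter_subset _ _
      have hcard' : F'.card ≤ m := by
        have : F' ⊂ F := ⟨hsubF, fun hsub => (Finset.mem_filter.mp (hsub hv)).2 hvc⟩
        have := Finset.card_lt_card this
        omega
      have hclose' : ∀ x ∈ F', f x ∈ F' := by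
        intro x hx
        obtain ⟨hxF, hxc⟩ := Finset.mem_filter.mp hx
        refine Finset.mem_filter.mpr ⟨hclose x hxF, fun hfc => hxc (hbwd x hfc)⟩
      obtain ⟨L', hcyc', hpw', hcov', hsub'⟩ := ih F' hcard' hclose'
      refine ⟨c :: L', ?_, ?_, ?_, ?_⟩
      · intro d hd
        rcases List.mem_cons.mp hd with rfl | hd
        · exact ⟨hlen, hnodup, fun x hx => by rw [hnext x hx]; exact harc x⟩
        · exact hcyc' d hd
      · refine List.pairwise_cons.mpr ⟨?_, hpw'⟩
        intro d hd x hxc hxd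
        exact (Finset.mem_filter.mp (hsub' d hd x hxd)).2 hxc
      · intro u hu
        by_cases huc : u ∈ c
        · exact ⟨c, List.mem_cons_self, huc⟩
        · obtain ⟨d, hd, hud⟩ := hcov' u (Finset.mem_filter.mpr ⟨hu, huc⟩)
          exact ⟨d, List.mem_cons_of_mem _ hd, hud⟩
      · intro d hd x hxd
        rcases List.mem_cons.mp hd with rfl | hd
        · exact hcF x hxd
        · exact hsubF (hsub' d hd x hxd)
  obtain ⟨L, h1, h2, h3, _⟩ := main (Finset.univ.card) Finset.univ le_rfl (fun x _ => Finset.mem_univ _)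
  exact ⟨L, h1, h2, fun v => h3 v (Finset.mem_univ v)⟩

lemma core [DecidableEq V] [Fintype V] (A : V → V → Prop) [DecidableRel A]
    (V₁ V₂ : Finset V) (a : ℕ) (ha : 2 ≤ a)
    (hbip : IsBipartition A V₁ V₂) (h1 : V₁.card = a) (h2 : V₂.card = a)
    (hstrong : IsStrong A)
    (hdeg : ∀ u v, u ≠ v → ¬ A u v → ¬ A v u → 3 * a - 1 ≤ deg A u + deg A v)
    (S : Finset V) (hSV : S ⊆ V₁) (hhall : (outNbrs A S).card < S.card) :
    Odd a ∧ ∃ S R U W : Finset V, IsH1 A a S R U W := by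
  classical
  obtain ⟨hdisj, huniv, hnadj1, hnadj2⟩ := hbip
  set T := outNbrs A S with hT
  set W := V₂ \ T with hWdef
  set R := V₁ \ S with hRdef
  have hmem12 : ∀ x : V, x ∈ V₁ ∨ x ∈ V₂ := fun x =>
    mem_union.mp (huniv ▸ mem_univ x)
  have hne12 : ∀ x ∈ V₁, ∀ y ∈ V₂, x ≠ y := fun x hx y hy h =>
    (Finset.disjoint_left.mp hdisj hx) (h ▸ hy)
  have houtT : ∀ x ∈ S, ∀ y, A x y → y ∈ T := fun x hx y hxy =>
    mem_filter.mpr ⟨mem_univ y, x, hx, hxy⟩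
  have hV1 : ∀ x ∈ V₂, ∀ y, (A x y ∨ A y x) → y ∈ V₁ := by
    intro x hx y hy
    rcases hmem12 y with h | h
    · exact h
    · rcases hy with hy | hy
      · exact absurd hy (hnadj2 x hx y h)
      · exact absurd hy (hnadj2 y h x hx)
  have hV2 : ∀ x ∈ V₁, ∀ y, (A x y ∨ A y x) → y ∈ V₂ := by
    intro x hx y hy
    rcases hmem12 y with h | h
    · rcases hy with hy | hy
      · exact absurd hy (hnadj1 x hx y h)
      · exact absurd hy (hnadj1 y h x hx)
    · exact h
  have hTV2 : T ⊆ V₂ := by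
    intro y hy
    obtain ⟨-, x, hxS, hxy⟩ := mem_filter.mp hy
    exact hV2 x (hSV hxS) y (Or.inl hxy)
  -- filter subset lemmas
  have houts1 : ∀ x ∈ V₁, Finset.univ.filter (fun y => A x y) ⊆ V₂ :=
    fun x hx y hy => hV2 x hx y (Or.inl (mem_filter.mp hy).2)
  have hins1 : ∀ x ∈ V₁, Finset.univ.filter (fun y => A y x) ⊆ V₂ :=
    fun x hx y hy => hV2 x hx y (Or.inr (mem_filter.mp hy).2)
  have houts2 : ∀ x ∈ V₂, Finset.univ.filter (fun y => A x y) ⊆ V₁ :=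
    fun x hx y hy => hV1 x hx y (Or.inl (mem_filter.mp hy).2)
  have hins2 : ∀ x ∈ V₂, Finset.univ.filter (fun y => A y x) ⊆ V₁ :=
    fun x hx y hy => hV1 x hx y (Or.inr (mem_filter.mp hy).2)
  have houtS : ∀ x ∈ S, Finset.univ.filter (fun y => A x y) ⊆ T :=
    fun x hx y hy => houtT x hx y (mem_filter.mp hy).2
  have hinW : ∀ w ∈ W, Finset.univ.filter (fun y => A y w) ⊆ R := by
    intro w hw z hz
    have hAzw : A z w := (mem_filter.mp hz).2
    have hw2 : w ∈ V₂ := (mem_sdiff.mp hw).1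
    have hz1 : z ∈ V₁ := hV1 w hw2 z (Or.inr hAzw)
    refine mem_sdiff.mpr ⟨hz1, fun hzS => (mem_sdiff.mp hw).2 (houtT z hzS w hAzw)⟩
  -- basic cards
  have hkA : S.card ≤ a := h1 ▸ Finset.card_le_card hSV
  have htA : T.card ≤ a := h2 ▸ Finset.card_le_card hTV2
  have hWcard : W.card = a - T.card := by rw [hWdef, Finset.card_sdiff_of_subset hTV2, h2]
  have hRcard : R.card = a - S.card := by rw [hRdef, Finset.card_sdiff_of_subset hSV, h1]
  -- every vertex has an out-arc and an in-arc
  have hcardV : 1 < Fintype.card V := by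
    have h4 : (Finset.univ : Finset V).card = 2 * a := by
      rw [← huniv, Finset.card_union_of_disjoint hdisj, h1, h2]; omega
    rw [← Finset.card_univ, h4]; omega
  have hout : ∀ x : V, ∃ y, A x y := by
    intro x
    obtain ⟨b, hbne⟩ := Fintype.exists_ne_of_one_lt_card hcardV x
    rcases (hstrong x b).cases_head with h | ⟨c, hc, -⟩
    · exact absurd h.symm hbne
    · exact ⟨c, hc⟩
  have hin : ∀ y : V, ∃ x, A x y := by
    intro y
    obtain ⟨b, hbne⟩ := Fintype.exists_ne_of_one_lt_card hcardV y
    rcases (hstrong b y).cases_tail with h | ⟨c, -, hc⟩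
    · exact absurd h.symm hbne
    · exact ⟨c, hc⟩
  -- S, T, W, R nonempty facts
  have hSne : S.Nonempty := Finset.card_pos.mp (by omega)
  have hTpos : 1 ≤ T.card := by
    obtain ⟨x, hx⟩ := hSne
    obtain ⟨y, hy⟩ := hout x
    exact Finset.card_pos.mpr ⟨y, houtT x hx y hy⟩
  have hWne : W.Nonempty := Finset.card_pos.mp (by omega)
  have hRpos : 1 ≤ R.card := by
    obtain ⟨w, hw⟩ := hWne
    obtain ⟨z, hz⟩ := hin w
    exact Finset.card_pos.mpr ⟨z, hinW w hw (mem_filter.mpr ⟨mem_univ z, hz⟩)⟩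
  have hkA' : S.card + 1 ≤ a := by omega
  -- Key 1 : all arcs from W to S
  have hWS : ∀ x ∈ S, ∀ y ∈ W, A y x := by
    intro x hx y hy
    by_contra hAyx
    have hAxy : ¬ A x y := fun h => (mem_sdiff.mp hy).2 (houtT x hx y h)
    have hxy : x ≠ y := hne12 x (hSV hx) y ((mem_sdiff.mp hy).1)
    have hd := hdeg x y hxy hAxy hAyx
    have e1 := Finset.card_le_card (houtS x hx)
    have e2 := h2 ▸ Finset.card_le_card (hins1 x (hSV hx))
    have hoy := h1 ▸ Finset.card_le_card (houts2 y ((mem_sdiff.mp hy).1))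
    have hiy := Finset.card_le_card (hinW y hy)
    have hoya : a ≤ (Finset.univ.filter (fun z => A y z)).card := by
      unfold deg at hd; omega
    have : Finset.univ.filter (fun z => A y z) = V₁ :=
      Finset.eq_of_subset_of_card_le (houts2 y ((mem_sdiff.mp hy).1)) (by omega)
    exact hAyx ((mem_filter.mp (this ▸ hSV hx)).2)
  -- parity
  have hP1 : a ≤ 2 * T.card + 1 := by
    obtain ⟨s₁, hs₁, s₂, hs₂, hne⟩ := Finset.one_lt_card.mp (show 1 < S.card by omega)
    have hd := hdeg s₁ s₂ hne (hnadj1 s₁ (hSV hs₁) s₂ (hSV hs₂)) (hnadj1 s₂ (hSV hs₂) s₁ (hSV hs₁))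
    have e1 := Finset.card_le_card (houtS s₁ hs₁)
    have e2 := h2 ▸ Finset.card_le_card (hins1 s₁ (hSV hs₁))
    have e3 := Finset.card_le_card (houtS s₂ hs₂)
    have e4 := h2 ▸ Finset.card_le_card (hins1 s₂ (hSV hs₂))
    unfold deg at hd; omega
  have hP2 : 2 * S.card ≤ a + 1 := by
    obtain ⟨w₁, hw₁, w₂, hw₂, hne⟩ := Finset.one_lt_card.mp (show 1 < W.card by omega)
    have m1 := (mem_sdiff.mp hw₁).1
    have m2 := (mem_sdiff.mp hw₂).1
    have hd := hdeg w₁ w₂ hne (hnadj2 w₁ m1 w₂ m2) (hnadj2 w₂ m2 w₁ m1)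
    have e1 := h1 ▸ Finset.card_le_card (houts2 w₁ m1)
    have e2 := Finset.card_le_card (hinW w₁ hw₁)
    have e3 := h1 ▸ Finset.card_le_card (houts2 w₂ m2)
    have e4 := Finset.card_le_card (hinW w₂ hw₂)
    unfold deg at hd; omega
  have hk2 : 2 * S.card = a + 1 := by omega
  have ht2 : 2 * T.card = a - 1 := by omega
  have hodd : Odd a := ⟨T.card, by omega⟩
  -- exact degrees on S
  have hES : ∀ s ∈ S, (Finset.univ.filter (fun y => A s y)) = T ∧
      (Finset.univ.filter (fun y => A y s)) = V₂ := by
    intro s hs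
    obtain ⟨b, hbS, hbs⟩ := Finset.exists_mem_ne (show 1 < S.card by omega) s
    have hd := hdeg s b (Ne.symm hbs) (hnadj1 s (hSV hs) b (hSV hbS)) (hnadj1 b (hSV hbS) s (hSV hs))
    have e1 := Finset.card_le_card (houtS s hs)
    have e2 := h2 ▸ Finset.card_le_card (hins1 s (hSV hs))
    have e3 := Finset.card_le_card (houtS b hbS)
    have e4 := h2 ▸ Finset.card_le_card (hins1 b (hSV hbS))
    unfold deg at hd
    constructor
    · exact (Finset.eq_of_subset_of_card_le (houtS s hs) (by omega)).symm ▸ rfl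
    · exact Finset.eq_of_subset_of_card_le (hins1 s (hSV hs)) (by omega)
  have hsu : ∀ s ∈ S, ∀ u ∈ T, A s u ∧ A u s := by
    intro s hs u hu
    obtain ⟨hos, his⟩ := hES s hs
    exact ⟨(mem_filter.mp (hos ▸ hu : u ∈ Finset.univ.filter (fun y => A s y))).2,
      (mem_filter.mp (his ▸ hTV2 hu : u ∈ Finset.univ.filter (fun y => A y s))).2⟩
  have hws : ∀ s ∈ S, ∀ w ∈ W, A w s ∧ ¬ A s w := by
    intro s hs w hw
    obtain ⟨hos, his⟩ := hES s hs
    refine ⟨(mem_filter.mp (his ▸ (mem_sdiff.mp hw).1 : w ∈ Finset.univ.filter (fun y => A y s))).2, ?_⟩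
    intro hAsw
    have : w ∈ T := hos ▸ mem_filter.mpr ⟨mem_univ w, hAsw⟩
    exact (mem_sdiff.mp hw).2 this
  -- exact degrees on W
  have hEW : ∀ w ∈ W, (Finset.univ.filter (fun y => A w y)) = V₁ ∧
      (Finset.univ.filter (fun y => A y w)) = R := by
    intro w hw
    have m1 := (mem_sdiff.mp hw).1
    obtain ⟨b, hbW, hbw⟩ := Finset.exists_mem_ne (show 1 < W.card by omega) w
    have m2 := (mem_sdiff.mp hbW).1
    have hd := hdeg w b (Ne.symm hbw) (hnadj2 w m1 b m2) (hnadj2 b m2 w m1)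
    have e1 := h1 ▸ Finset.card_le_card (houts2 w m1)
    have e2 := Finset.card_le_card (hinW w hw)
    have e3 := h1 ▸ Finset.card_le_card (houts2 b m2)
    have e4 := Finset.card_le_card (hinW b hbW)
    unfold deg at hd
    exact ⟨Finset.eq_of_subset_of_card_le (houts2 w m1) (by omega),
      Finset.eq_of_subset_of_card_le (hinW w hw) (by omega)⟩
  have hrw : ∀ r ∈ R, ∀ w ∈ W, A r w ∧ A w r := by
    intro r hr w hw
    obtain ⟨how, hiw⟩ := hEW w hw
    exact ⟨(mem_filter.mp (hiw ▸ hr : r ∈ Finset.univ.filter (fun y => A y w))).2,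
      (mem_filter.mp (how ▸ (mem_sdiff.mp hr).1 : r ∈ Finset.univ.filter (fun y => A w y))).2⟩
  -- degIn bound for R
  have hRdeg : ∀ r ∈ R, (a - 3) / 2 ≤ degIn A T r := by
    intro r hr
    have hr1 : r ∈ V₁ := (mem_sdiff.mp hr).1
    obtain ⟨s, hs⟩ := hSne
    have hrs : r ≠ s := fun h => (mem_sdiff.mp hr).2 (h ▸ hs)
    have hd := hdeg r s hrs (hnadj1 r hr1 s (hSV hs)) (hnadj1 s (hSV hs) r hr1)
    obtain ⟨hos, his⟩ := hES s hs
    have hds : (Finset.univ.filter (fun y => A s y)).card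
        + (Finset.univ.filter (fun y => A y s)).card = T.card + a := by rw [hos, his, h2]
    have hro : Finset.univ.filter (fun y => A r y) = T.filter (fun y => A r y) ∪ W := by
      ext y
      simp only [mem_filter, mem_univ, true_and, mem_union]
      constructor
      · intro hAry
        have hy2 : y ∈ V₂ := hV2 r hr1 y (Or.inl hAry)
        by_cases hyT : y ∈ T
        · exact Or.inl ⟨hyT, hAry⟩
        · exact Or.inr (mem_sdiff.mpr ⟨hy2, hyT⟩)
      · rintro (⟨_, h⟩ | hyW)
        · exact h
        · exact (hrw r hr y hyW).1
    have hri : Finset.univ.filter (fun y => A y r) = T.filter (fun y => A y r) ∪ W := by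
      ext y
      simp only [mem_filter, mem_univ, true_and, mem_union]
      constructor
      · intro hAyr
        have hy2 : y ∈ V₂ := hV2 r hr1 y (Or.inr hAyr)
        by_cases hyT : y ∈ T
        · exact Or.inl ⟨hyT, hAyr⟩
        · exact Or.inr (mem_sdiff.mpr ⟨hy2, hyT⟩)
      · rintro (⟨_, h⟩ | hyW)
        · exact h
        · exact (hrw r hr y hyW).2
    have hdisjo : Disjoint (T.filter (fun y => A r y)) W :=
      Finset.disjoint_sdiff.mono_left (Finset.filter_subset _ _)
    have hdisji : Disjoint (T.filter (fun y => A y r)) W :=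
      Finset.disjoint_sdiff.mono_left (Finset.filter_subset _ _)
    have hco : (Finset.univ.filter (fun y => A r y)).card
        = (T.filter (fun y => A r y)).card + W.card := by
      rw [hro, Finset.card_union_of_disjoint hdisjo]
    have hci : (Finset.univ.filter (fun y => A y r)).card
        = (T.filter (fun y => A y r)).card + W.card := by
      rw [hri, Finset.card_union_of_disjoint hdisji]
    unfold deg at hd
    unfold degIn
    omega
  -- degIn bound for U = T
  have hUdeg : ∀ u ∈ T, (a - 3) / 2 ≤ degIn A R u := by
    intro u hu
    have hu2 : u ∈ V₂ := hTV2 hu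
    obtain ⟨w, hw⟩ := hWne
    have huw : u ≠ w := fun h => (mem_sdiff.mp hw).2 (h ▸ hu)
    have hd := hdeg u w huw (hnadj2 u hu2 w ((mem_sdiff.mp hw).1)) (hnadj2 w ((mem_sdiff.mp hw).1) u hu2)
    obtain ⟨how, hiw⟩ := hEW w hw
    have hdw : (Finset.univ.filter (fun y => A w y)).card
        + (Finset.univ.filter (fun y => A y w)).card = a + R.card := by rw [how, hiw, h1]
    have huo : Finset.univ.filter (fun y => A u y) = R.filter (fun y => A u y) ∪ S := by
      ext y
      simp only [mem_filter, mem_univ, true_and, mem_union]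
      constructor
      · intro hAuy
        have hy1 : y ∈ V₁ := hV1 u hu2 y (Or.inl hAuy)
        by_cases hyS : y ∈ S
        · exact Or.inr hyS
        · exact Or.inl ⟨mem_sdiff.mpr ⟨hy1, hyS⟩, hAuy⟩
      · rintro (⟨_, h⟩ | hyS)
        · exact h
        · exact (hsu y hyS u hu).2
    have hui : Finset.univ.filter (fun y => A y u) = R.filter (fun y => A y u) ∪ S := by
      ext y
      simp only [mem_filter, mem_univ, true_and, mem_union]
      constructor
      · intro hAyu
        have hy1 : y ∈ V₁ := hV1 u hu2 y (Or.inr hAyu)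
        by_cases hyS : y ∈ S
        · exact Or.inr hyS
        · exact Or.inl ⟨mem_sdiff.mpr ⟨hy1, hyS⟩, hAyu⟩
      · rintro (⟨_, h⟩ | hyS)
        · exact h
        · exact (hsu y hyS u hu).1
    have hdisjo : Disjoint (R.filter (fun y => A u y)) S := by
      refine Finset.disjoint_left.mpr ?_
      intro y hy hyS
      exact (mem_sdiff.mp (mem_filter.mp hy).1).2 hyS
    have hdisji : Disjoint (R.filter (fun y => A y u)) S := by
      refine Finset.disjoint_left.mpr ?_
      intro y hy hyS
      exact (mem_sdiff.mp (mem_filter.mp hy).1).2 hyS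
    have hco : (Finset.univ.filter (fun y => A u y)).card
        = (R.filter (fun y => A u y)).card + S.card := by
      rw [huo, Finset.card_union_of_disjoint hdisjo]
    have hci : (Finset.univ.filter (fun y => A y u)).card
        = (R.filter (fun y => A y u)).card + S.card := by
      rw [hui, Finset.card_union_of_disjoint hdisji]
    unfold deg at hd
    unfold degIn
    omega
  -- existence of an arc from T to R
  have hex : ∃ u ∈ T, ∃ r ∈ R, A u r := by
    by_contra hno
    push_neg at hno
    obtain ⟨s, hs⟩ := hSne
    obtain ⟨r, hr⟩ := Finset.card_pos.mp (show 0 < R.card by omega)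
    have hreach : ∀ z, Relation.ReflTransGen A s z → z ∈ S ∪ T := by
      intro z hz
      induction hz with
      | refl => exact mem_union_left _ hs
      | @tail b c hsb hbc ih =>
        rcases mem_union.mp ih with hb | hb
        · exact mem_union_right _ (houtT b hb c hbc)
        · have hc1 : c ∈ V₁ := hV1 b (hTV2 hb) c (Or.inl hbc)
          by_cases hcS : c ∈ S
          · exact mem_union_left _ hcS
          · exact absurd hbc (hno b hb c (mem_sdiff.mpr ⟨hc1, hcS⟩))
    rcases mem_union.mp (hreach r (hstrong s r)) with h | h
    · exact (mem_sdiff.mp hr).2 h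
    · exact (hne12 r ((mem_sdiff.mp hr).1) r (hTV2 h)) rfl
  -- assemble
  have hSR : S ∪ R = V₁ := Finset.union_sdiff_of_subset hSV
  have hTW : T ∪ W = V₂ := Finset.union_sdiff_of_subset hTV2
  refine ⟨hodd, S, R, T, W, hodd, by omega, Finset.disjoint_sdiff, Finset.disjoint_sdiff,
    ?_, ?_, by omega, by omega, by omega, by omega, ?_, ?_, hrw, ?_, ?_, ?_, hex, hRdeg, hUdeg⟩
  · rw [hSR, hTW]; exact hdisj
  · rw [hSR, Finset.union_assoc, hTW, huniv]
  · rw [hSR]; exact hnadj1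
  · rw [hTW]; exact hnadj2
  · intro u hu s hs
    exact ⟨(hsu s hs u hu).2, (hsu s hs u hu).1⟩
  · intro w hw s hs
    exact (hws s hs w hw).1
  · intro s hs w hw
    exact (hws s hs w hw).2


theorem stmt7 {V : Type*} [DecidableEq V] [Fintype V] (A : V → V → Prop) [DecidableRel A]
    (V₁ V₂ : Finset V) (a : ℕ) (ha : 2 ≤ a)
    (hbip : IsBipartition A V₁ V₂) (h1 : V₁.card = a) (h2 : V₂.card = a)
    (hstrong : IsStrong A)
    (hdeg : ∀ u v, u ≠ v → ¬ A u v → ¬ A v u → 3 * a - 1 ≤ deg A u + deg A v) :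
    HasCycleFactor A ∨ (Odd a ∧ ∃ S R U W : Finset V, IsH1 A a S R U W) := by
  classical
  by_cases hhall : ∀ s : Finset V,
      s.card ≤ (s.biUnion (fun x => Finset.univ.filter (fun y => A x y))).card
  · left
    obtain ⟨f, hinj, hf⟩ := (Finset.all_card_le_biUnion_card_iff_exists_injective _).mp hhall
    have harc : ∀ v, A v (f v) := fun v => (Finset.mem_filter.mp (hf v)).2
    have hne : ∀ v, f v ≠ v := by
      intro v h
      have hA : A v v := by have := harc v; rwa [h] at this
      rcases mem_union.mp (hbip.2.1 ▸ mem_univ v) with hv | hv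
      · exact hbip.2.2.1 v hv v hv hA
      · exact hbip.2.2.2 v hv v hv hA
    exact hasCycleFactor_of_succ A f hinj harc hne
  · right
    push_neg at hhall
    obtain ⟨s, hs⟩ := hhall
    obtain ⟨hdisj, huniv, hnadj1, hnadj2⟩ := hbip
    have hbi : s.biUnion (fun x => Finset.univ.filter (fun y => A x y))
        = outNbrs A (s ∩ V₁) ∪ outNbrs A (s ∩ V₂) := by
      ext y
      simp only [Finset.mem_biUnion, Finset.mem_filter, Finset.mem_univ, true_and,
        Finset.mem_union, outNbrs, Finset.mem_inter]
      constructor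
      · rintro ⟨x, hxs, hA⟩
        rcases mem_union.mp (huniv ▸ mem_univ x) with h | h
        · exact Or.inl ⟨x, ⟨hxs, h⟩, hA⟩
        · exact Or.inr ⟨x, ⟨hxs, h⟩, hA⟩
      · rintro (⟨x, ⟨hxs, _⟩, hA⟩ | ⟨x, ⟨hxs, _⟩, hA⟩) <;> exact ⟨x, hxs, hA⟩
    have hsplit : (s ∩ V₁) ∪ (s ∩ V₂) = s := by
      rw [← Finset.inter_union_distrib_left, huniv, Finset.inter_univ]
    have hdisj' : Disjoint (s ∩ V₁) (s ∩ V₂) :=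
      hdisj.mono Finset.inter_subset_right Finset.inter_subset_right
    have hscard : (s ∩ V₁ ∪ s ∩ V₂).card = (s ∩ V₁).card + (s ∩ V₂).card :=
      Finset.card_union_of_disjoint hdisj'
    rw [hsplit] at hscard
    have hN1 : outNbrs A (s ∩ V₁) ⊆ V₂ := by
      intro y hy
      simp only [outNbrs, Finset.mem_filter, Finset.mem_univ, true_and,
        Finset.mem_inter] at hy
      obtain ⟨x, ⟨-, hx1⟩, hA⟩ := hy
      rcases mem_union.mp (huniv ▸ mem_univ y) with h | h
      · exact absurd hA (hnadj1 x hx1 y h)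
      · exact h
    have hN2 : outNbrs A (s ∩ V₂) ⊆ V₁ := by
      intro y hy
      simp only [outNbrs, Finset.mem_filter, Finset.mem_univ, true_and,
        Finset.mem_inter] at hy
      obtain ⟨x, ⟨-, hx2⟩, hA⟩ := hy
      rcases mem_union.mp (huniv ▸ mem_univ y) with h | h
      · exact h
      · exact absurd hA (hnadj2 x hx2 y h)
    have hcu : (outNbrs A (s ∩ V₁) ∪ outNbrs A (s ∩ V₂)).card
        = (outNbrs A (s ∩ V₁)).card + (outNbrs A (s ∩ V₂)).card :=
      Finset.card_union_of_disjoint (hdisj.symm.mono hN1 hN2)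
    rw [hbi] at hs
    by_cases h1' : (outNbrs A (s ∩ V₁)).card < (s ∩ V₁).card
    · exact core A V₁ V₂ a ha ⟨hdisj, huniv, hnadj1, hnadj2⟩ h1 h2 hstrong hdeg
        (s ∩ V₁) Finset.inter_subset_right h1'
    · have h2' : (outNbrs A (s ∩ V₂)).card < (s ∩ V₂).card := by omega
      exact core A V₂ V₁ a ha
        ⟨hdisj.symm, by rw [Finset.union_comm]; exact huniv, hnadj2, hnadj1⟩ h2 h1 hstrong hdeg
        (s ∩ V₂) Finset.inter_subset_right h2'
end

section
/- Every digraph $H_1$ in the family $\mathcal{H}_1$ is strongly connected, satisfies $d(u)+d(v) \ge 3a - 1$ for all pairs of non-adjacent vertices $u, v$, and is not hamiltonian (indeed it has no perfect matching from $V_1$ to $V_2$, since $|N^+(S)| = |U| < |S|$). -/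
open Finset

variable {V : Type*}

lemma cycNext_injOn [DecidableEq V] {c : List V} (hnd : c.Nodup) {x y : V}
    (hx : x ∈ c) (hy : y ∈ c) (h : cycNext c x = cycNext c y) : x = y := by
  have hlen : 0 < c.length := List.length_pos_iff.mpr (List.ne_nil_of_mem hx)
  have hix : c.idxOf x < c.length := List.idxOf_lt_length_iff.mpr hx
  have hiy : c.idxOf y < c.length := List.idxOf_lt_length_iff.mpr hy
  have h1 : (c.idxOf x + 1) % c.length < c.length := Nat.mod_lt _ hlen
  have h2 : (c.idxOf y + 1) % c.length < c.length := Nat.mod_lt _ hlen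
  unfold cycNext at h
  rw [List.getD_eq_getElem c x h1, List.getD_eq_getElem c y h2] at h
  have hij : (c.idxOf x + 1) % c.length = (c.idxOf y + 1) % c.length :=
    (hnd.getElem_inj_iff).mp h
  have e1 : (c.idxOf x + 1) % c.length
      = if c.idxOf x + 1 = c.length then 0 else c.idxOf x + 1 := by
    split
    · next hc => rw [hc, Nat.mod_self]
    · next hc => exact Nat.mod_eq_of_lt (by omega)
  have e2 : (c.idxOf y + 1) % c.length
      = if c.idxOf y + 1 = c.length then 0 else c.idxOf y + 1 := by
    split
    · next hc => rw [hc, Nat.mod_self]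
    · next hc => exact Nat.mod_eq_of_lt (by omega)
  rw [e1, e2] at hij
  have hii : c.idxOf x = c.idxOf y := by
    split at hij <;> split at hij <;> omega
  calc x = c.get ⟨c.idxOf x, hix⟩ := (List.idxOf_get hix).symm
    _ = c.get ⟨c.idxOf y, hiy⟩ := by congr 1; exact Fin.ext hii
    _ = y := List.idxOf_get hiy

theorem stmt8 {V : Type*} [DecidableEq V] [Fintype V] (A : V → V → Prop) [DecidableRel A]
    (a : ℕ) (S R U W : Finset V) (h : IsH1 A a S R U W) :
    IsStrong A ∧
    (∀ u v, u ≠ v → ¬ A u v → ¬ A v u → 3 * a - 1 ≤ deg A u + deg A v) ∧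
    ¬ HasPerfectMatching A (S ∪ R) (U ∪ W) ∧
    ¬ IsHamiltonian A := by
  obtain ⟨hodd, ha3, hSR, hUW, hV12, huniv, hcS, hcW, hcU, hcR, hA1, hA2, hRW, hUS, hWS,
    hnSW, hex, hdR, hdU⟩ := h
  obtain ⟨k, hk⟩ := hodd
  subst hk
  have hk1 : 1 ≤ k := by omega
  have hS' : S.card = k + 1 := by omega
  have hW' : W.card = k + 1 := by omega
  have hU' : U.card = k := by omega
  have hR' : R.card = k := by omega
  have hmem : ∀ v : V, v ∈ S ∨ v ∈ R ∨ v ∈ U ∨ v ∈ W := by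
    intro v
    have hv : v ∈ S ∪ R ∪ U ∪ W := by rw [huniv]; exact mem_univ v
    simp only [Finset.mem_union] at hv
    tauto
  obtain ⟨s0, hs0⟩ := Finset.card_pos.mp (by omega : 0 < S.card)
  obtain ⟨w0, hw0⟩ := Finset.card_pos.mp (by omega : 0 < W.card)
  obtain ⟨u0, hu0⟩ := Finset.card_pos.mp (by omega : 0 < U.card)
  obtain ⟨u1, hu1, r1, hr1, har⟩ := hex
  have hSmem : ∀ x ∈ S, x ∈ S ∪ R := fun x hx => mem_union_left _ hx
  have hRmem : ∀ x ∈ R, x ∈ S ∪ R := fun x hx => mem_union_right _ hx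
  have hUmem : ∀ x ∈ U, x ∈ U ∪ W := fun x hx => mem_union_left _ hx
  have hWmem : ∀ x ∈ W, x ∈ U ∪ W := fun x hx => mem_union_right _ hx
  have degAll : ∀ v, 3 * k + 1 ≤ deg A v := by
    intro v
    rcases hmem v with hv | hv | hv | hv
    · -- v ∈ S
      have e1 : Finset.univ.filter (fun y => A v y) = U := by
        ext y
        simp only [mem_filter, mem_univ, true_and]
        constructor
        · intro hAy
          rcases hmem y with hy | hy | hy | hy
          · exact absurd hAy (hA1 v (hSmem v hv) y (hSmem y hy))
          · exact absurd hAy (hA1 v (hSmem v hv) y (hRmem y hy))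
          · exact hy
          · exact absurd hAy (hnSW v hv y hy)
        · intro hy; exact (hUS y hy v hv).2
      have e2 : Finset.univ.filter (fun y => A y v) = U ∪ W := by
        ext y
        simp only [mem_filter, mem_univ, true_and, Finset.mem_union]
        constructor
        · intro hAy
          rcases hmem y with hy | hy | hy | hy
          · exact absurd hAy (hA1 y (hSmem y hy) v (hSmem v hv))
          · exact absurd hAy (hA1 y (hRmem y hy) v (hSmem v hv))
          · exact Or.inl hy
          · exact Or.inr hy
        · rintro (hy | hy)
          · exact (hUS y hy v hv).1
          · exact hWS y hy v hv
      rw [deg, e1, e2, Finset.card_union_of_disjoint hUW]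
      omega
    · -- v ∈ R
      have e1 : Finset.univ.filter (fun y => A v y) = W ∪ U.filter (fun y => A v y) := by
        ext y
        simp only [mem_filter, mem_univ, true_and, Finset.mem_union, mem_filter]
        constructor
        · intro hAy
          rcases hmem y with hy | hy | hy | hy
          · exact absurd hAy (hA1 v (hRmem v hv) y (hSmem y hy))
          · exact absurd hAy (hA1 v (hRmem v hv) y (hRmem y hy))
          · exact Or.inr ⟨hy, hAy⟩
          · exact Or.inl hy
        · rintro (hy | ⟨hy, hAy⟩)
          · exact (hRW v hv y hy).1
          · exact hAy
      have e2 : Finset.univ.filter (fun y => A y v) = W ∪ U.filter (fun y => A y v) := by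
        ext y
        simp only [mem_filter, mem_univ, true_and, Finset.mem_union, mem_filter]
        constructor
        · intro hAy
          rcases hmem y with hy | hy | hy | hy
          · exact absurd hAy (hA1 y (hSmem y hy) v (hRmem v hv))
          · exact absurd hAy (hA1 y (hRmem y hy) v (hRmem v hv))
          · exact Or.inr ⟨hy, hAy⟩
          · exact Or.inl hy
        · rintro (hy | ⟨hy, hAy⟩)
          · exact (hRW v hv y hy).2
          · exact hAy
      have hd1 : Disjoint W (U.filter (fun y => A v y)) :=
        Finset.disjoint_of_subset_right (Finset.filter_subset _ _) hUW.symm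
      have hd2 : Disjoint W (U.filter (fun y => A y v)) :=
        Finset.disjoint_of_subset_right (Finset.filter_subset _ _) hUW.symm
      rw [deg, e1, e2, Finset.card_union_of_disjoint hd1, Finset.card_union_of_disjoint hd2]
      have hb := hdR v hv
      unfold degIn at hb
      omega
    · -- v ∈ U
      have e1 : Finset.univ.filter (fun y => A v y) = S ∪ R.filter (fun y => A v y) := by
        ext y
        simp only [mem_filter, mem_univ, true_and, Finset.mem_union, mem_filter]
        constructor
        · intro hAy
          rcases hmem y with hy | hy | hy | hy
          · exact Or.inl hy
          · exact Or.inr ⟨hy, hAy⟩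
          · exact absurd hAy (hA2 v (hUmem v hv) y (hUmem y hy))
          · exact absurd hAy (hA2 v (hUmem v hv) y (hWmem y hy))
        · rintro (hy | ⟨hy, hAy⟩)
          · exact (hUS v hv y hy).1
          · exact hAy
      have e2 : Finset.univ.filter (fun y => A y v) = S ∪ R.filter (fun y => A y v) := by
        ext y
        simp only [mem_filter, mem_univ, true_and, Finset.mem_union, mem_filter]
        constructor
        · intro hAy
          rcases hmem y with hy | hy | hy | hy
          · exact Or.inl hy
          · exact Or.inr ⟨hy, hAy⟩
          · exact absurd hAy (hA2 y (hUmem y hy) v (hUmem v hv))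
          · exact absurd hAy (hA2 y (hWmem y hy) v (hUmem v hv))
        · rintro (hy | ⟨hy, hAy⟩)
          · exact (hUS v hv y hy).2
          · exact hAy
      have hd1 : Disjoint S (R.filter (fun y => A v y)) :=
        Finset.disjoint_of_subset_right (Finset.filter_subset _ _) hSR
      have hd2 : Disjoint S (R.filter (fun y => A y v)) :=
        Finset.disjoint_of_subset_right (Finset.filter_subset _ _) hSR
      rw [deg, e1, e2, Finset.card_union_of_disjoint hd1, Finset.card_union_of_disjoint hd2]
      have hb := hdU v hv
      unfold degIn at hb
      omega
    · -- v ∈ W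
      have e1 : Finset.univ.filter (fun y => A v y) = S ∪ R := by
        ext y
        simp only [mem_filter, mem_univ, true_and, Finset.mem_union]
        constructor
        · intro hAy
          rcases hmem y with hy | hy | hy | hy
          · exact Or.inl hy
          · exact Or.inr hy
          · exact absurd hAy (hA2 v (hWmem v hv) y (hUmem y hy))
          · exact absurd hAy (hA2 v (hWmem v hv) y (hWmem y hy))
        · rintro (hy | hy)
          · exact hWS v hv y hy
          · exact (hRW y hy v hv).2
      have e2 : Finset.univ.filter (fun y => A y v) = R := by
        ext y
        simp only [mem_filter, mem_univ, true_and]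
        constructor
        · intro hAy
          rcases hmem y with hy | hy | hy | hy
          · exact absurd hAy (hnSW y hy v hv)
          · exact hy
          · exact absurd hAy (hA2 y (hUmem y hy) v (hWmem v hv))
          · exact absurd hAy (hA2 y (hWmem y hy) v (hWmem v hv))
        · intro hy; exact (hRW y hy v hv).1
      rw [deg, e1, e2, Finset.card_union_of_disjoint hSR]
      omega
  have noPM : ¬ HasPerfectMatching A (S ∪ R) (U ∪ W) := by
    rintro ⟨f, hinj, hf⟩
    have hmapsto : ∀ s ∈ S, f s ∈ U := by
      intro s hs
      obtain ⟨hm, harc⟩ := hf s (mem_union_left _ hs)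
      rcases Finset.mem_union.mp hm with hy | hy
      · exact hy
      · exact absurd harc (hnSW s hs _ hy)
    have hcard : S.card ≤ U.card :=
      Finset.card_le_card_of_injOn f hmapsto
        (hinj.mono (Finset.coe_subset.mpr Finset.subset_union_left))
    omega
  refine ⟨?_, ?_, noPM, ?_⟩
  · intro x y
    have toS0 : ∀ v, Relation.ReflTransGen A v s0 := by
      intro v
      rcases hmem v with hv | hv | hv | hv
      · exact Relation.ReflTransGen.head (hUS u0 hu0 v hv).2
          (Relation.ReflTransGen.single (hUS u0 hu0 s0 hs0).1)
      · exact Relation.ReflTransGen.head (hRW v hv w0 hw0).1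
          (Relation.ReflTransGen.single (hWS w0 hw0 s0 hs0))
      · exact Relation.ReflTransGen.single (hUS v hv s0 hs0).1
      · exact Relation.ReflTransGen.single (hWS v hv s0 hs0)
    have fromS0 : ∀ v, Relation.ReflTransGen A s0 v := by
      intro v
      rcases hmem v with hv | hv | hv | hv
      · exact Relation.ReflTransGen.head (hUS u0 hu0 s0 hs0).2
          (Relation.ReflTransGen.single (hUS u0 hu0 v hv).1)
      · exact Relation.ReflTransGen.head (hUS u1 hu1 s0 hs0).2
          (Relation.ReflTransGen.head har
            (Relation.ReflTransGen.head (hRW r1 hr1 w0 hw0).1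
              (Relation.ReflTransGen.single (hRW v hv w0 hw0).2)))
      · exact Relation.ReflTransGen.single (hUS v hv s0 hs0).2
      · exact Relation.ReflTransGen.head (hUS u1 hu1 s0 hs0).2
          (Relation.ReflTransGen.head har
            (Relation.ReflTransGen.single (hRW r1 hr1 v hv).1))
    exact (toS0 x).trans (fromS0 y)
  · intro u v _ _ _
    have h1 := degAll u
    have h2 := degAll v
    omega
  · rintro ⟨c, ⟨hlen2, hnd, harc⟩, hall⟩
    apply noPM
    refine ⟨cycNext c, ?_, ?_⟩
    · intro x _ y _ hxy
      exact cycNext_injOn hnd (hall x) (hall y) hxy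
    · intro x hx
      have hA := harc x (hall x)
      refine ⟨?_, hA⟩
      rcases hmem (cycNext c x) with hy | hy | hy | hy
      · exact absurd hA (hA1 x hx _ (hSmem _ hy))
      · exact absurd hA (hA1 x hx _ (hRmem _ hy))
      · exact mem_union_left _ hy
      · exact mem_union_right _ hy
end

section
/- Let $D$ be a complete bipartite digraph minus one arc, on partite sets $A$ and $B$ with $|A| = |B| = m \ge 3$. Then for any $x \in A$ and $y \in B$, there exists a hamiltonian directed path in $D$ from $x$ to $y$. -/
open Finset

variable {V : Type*}

section Interleave
variable {V : Type*}

/-- Interleave two lists: `inter [a₁,a₂,…] [b₁,b₂,…] = [a₁,b₁,a₂,b₂,…]`. -/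
def inter : List V → List V → List V
  | [], ys => ys
  | a :: as, ys => a :: inter ys as
termination_by xs ys => xs.length + ys.length
decreasing_by simp; omega

@[simp] lemma inter_nil (ys : List V) : inter [] ys = ys := by simp [inter]

@[simp] lemma inter_cons (a : V) (as ys : List V) :
    inter (a :: as) ys = a :: inter ys as := by
  rw [inter]

lemma mem_inter {v : V} : ∀ (xs ys : List V), (v ∈ inter xs ys ↔ v ∈ xs ∨ v ∈ ys)
  | [], ys => by simp
  | a :: as, ys => by
    rw [inter_cons]
    simp only [List.mem_cons, mem_inter ys as]
    tauto
termination_by xs ys => xs.length + ys.length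
decreasing_by simp; omega

lemma nodup_inter : ∀ (xs ys : List V), xs.Nodup → ys.Nodup →
    (∀ a ∈ xs, a ∉ ys) → (inter xs ys).Nodup
  | [], ys => by simp
  | a :: as, ys => by
    intro hx hy hd
    rw [inter_cons, List.nodup_cons]
    refine ⟨?_, nodup_inter ys as hy (List.nodup_cons.1 hx).2
      (fun b hb hbas => hd b (List.mem_cons_of_mem a hbas) hb)⟩
    rw [mem_inter]
    push_neg
    exact ⟨hd a (List.mem_cons_self), (List.nodup_cons.1 hx).1⟩
termination_by xs ys => xs.length + ys.length
decreasing_by simp; omega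

lemma getLast?_cons_of_ne_nil {b : V} {l : List V} (h : l ≠ []) :
    (b :: l).getLast? = l.getLast? := by
  cases l with
  | nil => exact absurd rfl h
  | cons c l' => exact List.getLast?_cons_cons

lemma inter_ne_nil {a : V} (as ys : List V) : inter (a :: as) ys ≠ [] := by
  rw [inter_cons]; simp

lemma getLast?_inter (xs : List V) : ∀ ys : List V, xs ≠ [] → xs.length = ys.length →
    (inter xs ys).getLast? = ys.getLast? := by
  induction xs with
  | nil => simp
  | cons a as ih =>
    intro ys _ hlen
    cases ys with
    | nil => simp at hlen
    | cons b bs =>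
      rw [inter_cons, inter_cons]
      cases as with
      | nil =>
        have hbs : bs = [] := by
          simp only [List.length_cons, List.length_nil] at hlen
          exact List.eq_nil_of_length_eq_zero (by omega)
        subst hbs; simp
      | cons a' as' =>
        have hbs : bs ≠ [] := by
          intro h; subst h
          simp only [List.length_cons, List.length_nil] at hlen; omega
        rw [getLast?_cons_of_ne_nil (by simp [inter_ne_nil]),
          getLast?_cons_of_ne_nil (inter_ne_nil _ _),
          getLast?_cons_of_ne_nil hbs]
        exact ih bs (by simp) (by simpa using hlen)

lemma chain'_inter (A : V → V → Prop) (xs : List V) : ∀ ys : List V,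
    xs.length = ys.length →
    (∀ p ∈ xs.zip ys, A p.1 p.2) → (∀ p ∈ ys.zip xs.tail, A p.1 p.2) →
    List.Chain' A (inter xs ys) := by
  induction xs with
  | nil =>
    intro ys hlen _ _
    have : ys = [] := List.eq_nil_of_length_eq_zero (by simpa using hlen.symm)
    simp [this]; exact List.isChain_nil
  | cons a as ih =>
    intro ys hlen h1 h2
    cases ys with
    | nil => simp at hlen
    | cons b bs =>
      rw [inter_cons, inter_cons]
      have hab : A a b := h1 (a, b) (by simp [List.zip_cons_cons])
      have hchain : List.Chain' A (inter as bs) := by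
        apply ih bs (by simpa using hlen)
        · intro p hp
          exact h1 p (by simp only [List.zip_cons_cons, List.mem_cons]; right; exact hp)
        · intro p hp
          cases as with
          | nil => simp at hp
          | cons a' as' =>
            apply h2 p
            simp only [List.tail_cons, List.zip_cons_cons, List.mem_cons] at hp ⊢
            right; exact hp
      rw [show List.Chain' A (a :: b :: inter as bs) ↔ _ from List.isChain_cons_cons]
      refine ⟨hab, ?_⟩
      rw [List.isChain_cons]
      refine ⟨?_, hchain⟩
      intro c hc
      cases as with
      | nil =>
        have : bs = [] := List.eq_nil_of_length_eq_zero (by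
          simp only [List.length_cons, List.length_nil] at hlen; omega)
        subst this; simp at hc
      | cons a' as' =>
        rw [inter_cons] at hc
        simp only [List.head?_cons, Option.mem_some_iff] at hc
        subst hc
        exact h2 (b, a') (by simp [List.zip_cons_cons])

end Interleave

section Perm
variable {V : Type*} [DecidableEq V]

/-- `L` is a duplicate-free enumeration of the finset `s`. -/
def PermOf (s : Finset V) (L : List V) : Prop := L.Nodup ∧ ∀ v, v ∈ L ↔ v ∈ s

lemma permOf_toList (s : Finset V) : PermOf s s.toList :=
  ⟨s.nodup_toList, fun v => Finset.mem_toList⟩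

lemma permOf_cons {s : Finset V} {a : V} {L : List V} (ha : a ∈ s)
    (hL : PermOf (s.erase a) L) : PermOf s (a :: L) := by
  refine ⟨List.nodup_cons.2 ⟨fun hm => ?_, hL.1⟩, fun v => ?_⟩
  · have := (hL.2 a).1 hm; simp at this
  · simp only [List.mem_cons, hL.2 v, Finset.mem_erase]
    by_cases hva : v = a
    · subst hva; simp [ha]
    · simp [hva]

lemma permOf_append {s : Finset V} {a : V} {L : List V} (ha : a ∈ s)
    (hL : PermOf (s.erase a) L) : PermOf s (L ++ [a]) := by
  refine ⟨?_, fun v => ?_⟩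
  · rw [List.nodup_append]
    refine ⟨hL.1, List.nodup_singleton a, fun b hb c hb' hbc => ?_⟩
    subst hbc
    simp only [List.mem_singleton] at hb'
    subst hb'
    have := (hL.2 b).1 hb; simp at this
  · simp only [List.mem_append, List.mem_singleton, hL.2 v, Finset.mem_erase]
    by_cases hva : v = a
    · subst hva; simp [ha]
    · simp [hva]

lemma PermOf.length_eq {s : Finset V} {L : List V} (h : PermOf s L) :
    L.length = s.card := by
  have hts : L.toFinset = s := Finset.ext fun v => by
    rw [List.mem_toFinset]; exact h.2 v
  rw [← hts, List.toFinset_card_of_nodup h.1]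

end Perm

lemma zip_concat_of_length_eq {α β : Type*} :
    ∀ (l : List α) (a : α) (t : List β), l.length = t.length →
      (l ++ [a]).zip t = l.zip t
  | [], a, t, h => by
    have : t = [] := List.eq_nil_of_length_eq_zero (by simpa using h.symm)
    subst this; rfl
  | b :: l, a, c :: t, h => by
    simp only [List.cons_append, List.zip_cons_cons]
    rw [zip_concat_of_length_eq l a t (by simpa using h)]
  | b :: l, a, [], h => by simp at h

lemma build {V : Type*} [DecidableEq V] [Fintype V] (A : V → V → Prop)
    (X Y : Finset V) (e₁ e₂ : V)
    (hcomp : ∀ u ∈ X, ∀ v ∈ Y,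
      (A u v ↔ (u, v) ≠ (e₁, e₂)) ∧ (A v u ↔ (v, u) ≠ (e₁, e₂)))
    (hdisj : Disjoint X Y) (huniv : X ∪ Y = Finset.univ)
    (x y : V) (xs ys : List V)
    (hPX : PermOf X xs) (hPY : PermOf Y ys)
    (hlen : xs.length = ys.length)
    (hhead : xs.head? = some x) (hlast : ys.getLast? = some y)
    (h1 : (e₁, e₂) ∉ xs.zip ys) (h2 : (e₁, e₂) ∉ ys.zip xs.tail) :
    ∃ p : List V, p.head? = some x ∧ p.getLast? = some y ∧
      (p.Nodup ∧ p.Chain' A ∧ ∀ v, v ∈ p) := by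
  have hxsne : xs ≠ [] := by intro h; subst h; simp at hhead
  refine ⟨inter xs ys, ?_, ?_, ?_, ?_, ?_⟩
  · cases xs with
    | nil => exact absurd rfl hxsne
    | cons a as => rw [inter_cons]; simpa using hhead
  · rw [getLast?_inter xs ys hxsne hlen]; exact hlast
  · exact nodup_inter xs ys hPX.1 hPY.1 (fun a ha hay =>
      Finset.disjoint_left.1 hdisj ((hPX.2 a).1 ha) ((hPY.2 a).1 hay))
  · apply chain'_inter A xs ys hlen
    · intro p hp
      have hmem := List.of_mem_zip hp
      have hp1 : p.1 ∈ X := (hPX.2 p.1).1 hmem.1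
      have hp2 : p.2 ∈ Y := (hPY.2 p.2).1 hmem.2
      refine (hcomp p.1 hp1 p.2 hp2).1.mpr ?_
      intro hpe
      exact h1 (by rwa [← hpe])
    · intro p hp
      have hmem := List.of_mem_zip hp
      have hp1 : p.1 ∈ Y := (hPY.2 p.1).1 hmem.1
      have hp2 : p.2 ∈ X := (hPX.2 p.2).1 (List.mem_of_mem_tail hmem.2)
      refine (hcomp p.2 hp2 p.1 hp1).2.mpr ?_
      intro hpe
      exact h2 (by rwa [← hpe])
  · intro v
    rw [mem_inter]
    have hv : v ∈ X ∪ Y := huniv ▸ Finset.mem_univ v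
    rcases Finset.mem_union.1 hv with h | h
    · exact Or.inl ((hPX.2 v).2 h)
    · exact Or.inr ((hPY.2 v).2 h)


theorem stmt13' {V : Type*} [DecidableEq V] [Fintype V] (A : V → V → Prop)
    (X Y : Finset V) (m : ℕ) (hm : 3 ≤ m)
    (hdisj : Disjoint X Y) (huniv : X ∪ Y = Finset.univ)
    (hX : X.card = m) (hY : Y.card = m)
    (e₁ e₂ : V) (he : (e₁ ∈ X ∧ e₂ ∈ Y) ∨ (e₁ ∈ Y ∧ e₂ ∈ X))
    (hcomp : ∀ u ∈ X, ∀ v ∈ Y,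
      (A u v ↔ (u, v) ≠ (e₁, e₂)) ∧ (A v u ↔ (v, u) ≠ (e₁, e₂)))
    (hindX : ∀ u ∈ X, ∀ v ∈ X, ¬ A u v) (hindY : ∀ u ∈ Y, ∀ v ∈ Y, ¬ A u v)
    (x : V) (hx : x ∈ X) (y : V) (hy : y ∈ Y) :
    ∃ p : List V, p.head? = some x ∧ p.getLast? = some y ∧
      (p.Nodup ∧ p.Chain' A ∧ ∀ v, v ∈ p) := by
  clear hindX hindY
  have lenX : ∀ {L : List V}, PermOf X L → L.length = m := fun h => by
    rw [h.length_eq, hX]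
  have lenY : ∀ {L : List V}, PermOf Y L → L.length = m := fun h => by
    rw [h.length_eq, hY]
  have hne2 : ∀ (s : Finset V) (a b : V), s.card = m → ((s.erase a).erase b).Nonempty := by
    intro s a b hs
    apply Finset.card_pos.1
    have h1 : (s.erase a).card - 1 ≤ ((s.erase a).erase b).card :=
      Finset.pred_card_le_card_erase
    have h2 : s.card - 1 ≤ (s.erase a).card := Finset.pred_card_le_card_erase
    omega
  -- default lists
  have hPX0 : PermOf X (x :: (X.erase x).toList) := permOf_cons hx (permOf_toList _)
  have hPY0 : PermOf Y ((Y.erase y).toList ++ [y]) := permOf_append hy (permOf_toList _)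
  have hlast0 : ((Y.erase y).toList ++ [y]).getLast? = some y := List.getLast?_concat
  rcases he with ⟨he₁X, he₂Y⟩ | ⟨he₁Y, he₂X⟩
  · -- deleted arc goes from X to Y
    have h2auto : ∀ (ys zs : List V), PermOf Y ys → (e₁, e₂) ∉ ys.zip zs := by
      intro ys zs hP hmem
      exact Finset.disjoint_left.1 hdisj he₁X ((hP.2 e₁).1 (List.of_mem_zip hmem).1)
    by_cases hx1 : e₁ = x
    · obtain ⟨y₀, hy₀⟩ := hne2 Y e₂ y hY
      have hy₀e : y₀ ≠ e₂ := by
        have := Finset.mem_erase.1 (Finset.mem_of_mem_erase hy₀); exact this.1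
      have hy₀y : y₀ ≠ y := (Finset.mem_erase.1 hy₀).1
      have hy₀Y : y₀ ∈ Y := Finset.mem_of_mem_erase (Finset.mem_of_mem_erase hy₀)
      set t : List V := ((Y.erase y₀).erase y).toList with ht
      have hPY : PermOf Y (y₀ :: (t ++ [y])) :=
        permOf_cons hy₀Y (permOf_append (Finset.mem_erase.2 ⟨Ne.symm hy₀y, hy⟩)
          (permOf_toList _))
      refine build A X Y e₁ e₂ hcomp hdisj huniv x y _ _ hPX0 hPY
        (by rw [lenX hPX0, lenY hPY]) (by simp)
        (by rw [← List.cons_append]; exact List.getLast?_concat) ?_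
        (h2auto _ _ hPY)
      intro hmem
      rw [List.zip_cons_cons, List.mem_cons] at hmem
      rcases hmem with heq | hmem
      · rw [Prod.mk.injEq] at heq
        exact hy₀e heq.2.symm
      · have := (List.of_mem_zip hmem).1
        rw [hx1, Finset.mem_toList] at this
        simp at this
    · by_cases hy2 : e₂ = y
      · have he₁' : e₁ ∈ X.erase x := Finset.mem_erase.2 ⟨hx1, he₁X⟩
        obtain ⟨xl, hxl⟩ := hne2 X x e₁ hX
        have hxle : xl ≠ e₁ := (Finset.mem_erase.1 hxl).1
        have hxlx : xl ≠ x := (Finset.mem_erase.1 (Finset.mem_of_mem_erase hxl)).1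
        have hxlX : xl ∈ X := Finset.mem_of_mem_erase (Finset.mem_of_mem_erase hxl)
        set l : List V := ((X.erase xl).erase x).toList with hl
        have hPX : PermOf X ((x :: l) ++ [xl]) :=
          permOf_append hxlX (permOf_cons (Finset.mem_erase.2 ⟨Ne.symm hxlx, hx⟩)
            (permOf_toList _))
        have hlenfront : (x :: l).length = ((Y.erase y).toList).length := by
          have h1 : l.length = ((X.erase xl).erase x).card := (permOf_toList _).length_eq
          have h2 : ((X.erase xl).erase x).card = m - 2 := by
            rw [Finset.card_erase_of_mem (Finset.mem_erase.2 ⟨Ne.symm hxlx, hx⟩),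
              Finset.card_erase_of_mem hxlX, hX]
            omega
          have h3 : ((Y.erase y).toList).length = m - 1 := by
            rw [Finset.length_toList, Finset.card_erase_of_mem hy, hY]
          simp only [List.length_cons, h1, h2, h3]
          omega
        refine build A X Y e₁ e₂ hcomp hdisj huniv x y _ _ hPX hPY0
          (by rw [lenX hPX, lenY hPY0]) (by simp) hlast0 ?_ (h2auto _ _ hPY0)
        intro hmem
        rw [List.zip_append hlenfront, List.mem_append] at hmem
        rcases hmem with hmem | hmem
        · have := (List.of_mem_zip hmem).2
          rw [hy2, Finset.mem_toList] at this
          simp at this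
        · simp only [List.zip_cons_cons, List.zip_nil_right, List.mem_singleton,
            Prod.mk.injEq] at hmem
          exact hxle hmem.1.symm
      · have he₁' : e₁ ∈ X.erase x := Finset.mem_erase.2 ⟨hx1, he₁X⟩
        have hPX : PermOf X (x :: e₁ :: ((X.erase x).erase e₁).toList) :=
          permOf_cons hx (permOf_cons he₁' (permOf_toList _))
        set t : List V := ((Y.erase e₂).erase y).toList with ht
        have hPY : PermOf Y (e₂ :: (t ++ [y])) :=
          permOf_cons he₂Y (permOf_append (Finset.mem_erase.2 ⟨fun h => hy2 h.symm, hy⟩)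
            (permOf_toList _))
        refine build A X Y e₁ e₂ hcomp hdisj huniv x y _ _ hPX hPY
          (by rw [lenX hPX, lenY hPY]) (by simp)
          (by rw [← List.cons_append]; exact List.getLast?_concat) ?_
          (h2auto _ _ hPY)
        intro hmem
        rw [List.zip_cons_cons, List.mem_cons] at hmem
        rcases hmem with heq | hmem
        · rw [Prod.mk.injEq] at heq
          exact hx1 heq.1
        · have := (List.of_mem_zip hmem).2
          rw [List.mem_append, List.mem_singleton] at this
          rcases this with h | h
          · rw [Finset.mem_toList] at h; simp at h
          · exact hy2 h
  · -- deleted arc goes from Y to X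
    have h1auto : ∀ (xs ys : List V), PermOf X xs → (e₁, e₂) ∉ xs.zip ys := by
      intro xs ys hP hmem
      exact Finset.disjoint_left.1 hdisj ((hP.2 e₁).1 (List.of_mem_zip hmem).1) he₁Y
    by_cases hx2 : e₂ = x
    · refine build A X Y e₁ e₂ hcomp hdisj huniv x y _ _ hPX0 hPY0
        (by rw [lenX hPX0, lenY hPY0]) (by simp) hlast0 (h1auto _ _ hPX0) ?_
      intro hmem
      have := (List.of_mem_zip hmem).2
      rw [List.tail_cons] at this
      rw [hx2, Finset.mem_toList] at this
      simp at this
    · by_cases hy1 : e₁ = y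
      · have hlen' : ((Y.erase y).toList).length = ((x :: (X.erase x).toList).tail).length := by
          rw [List.tail_cons, Finset.length_toList, Finset.length_toList,
            Finset.card_erase_of_mem hy, Finset.card_erase_of_mem hx, hX, hY]
        refine build A X Y e₁ e₂ hcomp hdisj huniv x y _ _ hPX0 hPY0
          (by rw [lenX hPX0, lenY hPY0]) (by simp) hlast0 (h1auto _ _ hPX0) ?_
        intro hmem
        rw [zip_concat_of_length_eq _ _ _ hlen'] at hmem
        have := (List.of_mem_zip hmem).1
        rw [hy1, Finset.mem_toList] at this
        simp at this
      · have he₂' : e₂ ∈ X.erase x := Finset.mem_erase.2 ⟨hx2, he₂X⟩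
        obtain ⟨x₁, hx₁⟩ := hne2 X x e₂ hX
        have hx₁e : x₁ ≠ e₂ := (Finset.mem_erase.1 hx₁).1
        have hx₁x : x₁ ≠ x := (Finset.mem_erase.1 (Finset.mem_of_mem_erase hx₁)).1
        have hx₁X : x₁ ∈ X := Finset.mem_of_mem_erase (Finset.mem_of_mem_erase hx₁)
        have hPX : PermOf X (x :: x₁ :: ((X.erase x).erase x₁).toList) :=
          permOf_cons hx (permOf_cons (Finset.mem_erase.2 ⟨hx₁x, hx₁X⟩) (permOf_toList _))
        set t : List V := ((Y.erase e₁).erase y).toList with ht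
        have hPY : PermOf Y (e₁ :: (t ++ [y])) :=
          permOf_cons he₁Y (permOf_append (Finset.mem_erase.2 ⟨fun h => hy1 (h ▸ rfl), hy⟩)
            (permOf_toList _))
        refine build A X Y e₁ e₂ hcomp hdisj huniv x y _ _ hPX hPY
          (by rw [lenX hPX, lenY hPY]) (by simp)
          (by rw [← List.cons_append]; exact List.getLast?_concat)
          (h1auto _ _ hPX) ?_
        intro hmem
        rw [List.tail_cons, List.zip_cons_cons, List.mem_cons] at hmem
        rcases hmem with heq | hmem
        · rw [Prod.mk.injEq] at heq
          exact hx₁e heq.2.symm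
        · have := (List.of_mem_zip hmem).1
          rw [List.mem_append, List.mem_singleton] at this
          rcases this with h | h
          · rw [Finset.mem_toList] at h; simp at h
          · exact hy1 h

theorem stmt13 {V : Type*} [DecidableEq V] [Fintype V] (A : V → V → Prop)
    (X Y : Finset V) (m : ℕ) (hm : 3 ≤ m)
    (hdisj : Disjoint X Y) (huniv : X ∪ Y = Finset.univ)
    (hX : X.card = m) (hY : Y.card = m)
    (e₁ e₂ : V) (he : (e₁ ∈ X ∧ e₂ ∈ Y) ∨ (e₁ ∈ Y ∧ e₂ ∈ X))
    (hcomp : ∀ u ∈ X, ∀ v ∈ Y,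
      (A u v ↔ (u, v) ≠ (e₁, e₂)) ∧ (A v u ↔ (v, u) ≠ (e₁, e₂)))
    (hindX : ∀ u ∈ X, ∀ v ∈ X, ¬ A u v) (hindY : ∀ u ∈ Y, ∀ v ∈ Y, ¬ A u v)
    (x : V) (hx : x ∈ X) (y : V) (hy : y ∈ Y) :
    ∃ p : List V, p.head? = some x ∧ p.getLast? = some y ∧ IsHamDipath A p := by
  obtain ⟨p, h1, h2, h3⟩ := stmt13' A X Y m hm hdisj huniv hX hY e₁ e₂ he hcomp
    hindX hindY x hx y hy
  exact ⟨p, h1, h2, h3⟩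
end

section
/- The digraph $H_3$ (for even $a \ge 4$) is a strong balanced bipartite digraph of order $2a$ with $d(x) + d(y) \ge 3a - 2$ for all pairs of non-adjacent vertices $x, y$, but $H_3$ is not traceable (contains no hamiltonian directed path), since the maximum matching from $V_1$ to $V_2$ has size $a - 2$. -/
open Finset

variable {V : Type*}

theorem stmt16 {V : Type*} [DecidableEq V] [Fintype V] (A : V → V → Prop) [DecidableRel A]
    (a : ℕ) (S R U W : Finset V) (h : IsH3 A a S R U W) :
    IsStrong A ∧
    (∀ u v, u ≠ v → ¬ A u v → ¬ A v u → 3 * a - 2 ≤ deg A u + deg A v) ∧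
    (∀ M : Finset (V × V), IsMatching A (S ∪ R) (U ∪ W) M → M.card ≤ a - 2) ∧
    ¬ IsTraceable A := by
  obtain ⟨hEven, ha, hSR, hUW, hV12, hunion, hScard, hWcard, hUcard, hRcard,
    hV1ind, hV2ind, hR, hU, hWS, hSW⟩ := h
  obtain ⟨b, hab⟩ := hEven
  have hb : 2 ≤ b := by omega
  have hS' : S.card = b + 1 := by omega
  have hW' : W.card = b + 1 := by omega
  have hU' : U.card = b - 1 := by omega
  have hR' : R.card = b - 1 := by omega
  obtain ⟨r₀, hr₀⟩ : R.Nonempty := Finset.card_pos.mp (by omega)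
  obtain ⟨u₀, hu₀⟩ : U.Nonempty := Finset.card_pos.mp (by omega)
  have hmem : ∀ v : V, v ∈ S ∨ v ∈ R ∨ v ∈ U ∨ v ∈ W := by
    intro v
    have hv : v ∈ S ∪ R ∪ U ∪ W := hunion ▸ Finset.mem_univ v
    simp only [Finset.mem_union] at hv; tauto
  -- Part 1: strong
  have toU0 : ∀ v, Relation.ReflTransGen A v u₀ := by
    intro v
    rcases hmem v with hv|hv|hv|hv
    · exact .single (hU u₀ hu₀ v (Finset.mem_union_left _ hv)).2
    · exact .single (hR v hv u₀ (Finset.mem_union_left _ hu₀)).1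
    · exact .head (hU v hv r₀ (Finset.mem_union_right _ hr₀)).1
        (.single (hR r₀ hr₀ u₀ (Finset.mem_union_left _ hu₀)).1)
    · exact .head (hR r₀ hr₀ v (Finset.mem_union_right _ hv)).2
        (.single (hR r₀ hr₀ u₀ (Finset.mem_union_left _ hu₀)).1)
  have fromU0 : ∀ v, Relation.ReflTransGen A u₀ v := by
    intro v
    rcases hmem v with hv|hv|hv|hv
    · exact .single (hU u₀ hu₀ v (Finset.mem_union_left _ hv)).1
    · exact .single (hU u₀ hu₀ v (Finset.mem_union_right _ hv)).1
    · exact .head (hU u₀ hu₀ r₀ (Finset.mem_union_right _ hr₀)).1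
        (.single (hR r₀ hr₀ v (Finset.mem_union_left _ hv)).1)
    · exact .head (hU u₀ hu₀ r₀ (Finset.mem_union_right _ hr₀)).1
        (.single (hR r₀ hr₀ v (Finset.mem_union_right _ hv)).1)
  have hstrong : IsStrong A := fun x y => (toU0 x).trans (fromU0 y)
  -- Part 2: degrees
  have outLB : ∀ (X : Finset V) (v : V), (∀ y ∈ X, A v y) →
      X.card ≤ (Finset.univ.filter (fun y => A v y)).card := fun X v hX =>
    Finset.card_le_card fun y hy => Finset.mem_filter.mpr ⟨Finset.mem_univ y, hX y hy⟩
  have inLB : ∀ (X : Finset V) (v : V), (∀ y ∈ X, A y v) →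
      X.card ≤ (Finset.univ.filter (fun y => A y v)).card := fun X v hX =>
    Finset.card_le_card fun y hy => Finset.mem_filter.mpr ⟨Finset.mem_univ y, hX y hy⟩
  have cUW : (U ∪ W).card = 2 * b := by
    rw [Finset.card_union_of_disjoint hUW]; omega
  have cSR : (S ∪ R).card = 2 * b := by
    rw [Finset.card_union_of_disjoint hSR]; omega
  have degLB : ∀ v, 3 * b - 1 ≤ deg A v := by
    intro v
    unfold deg
    rcases hmem v with hv|hv|hv|hv
    · have h1 := outLB U v (fun y hy => (hU y hy v (Finset.mem_union_left _ hv)).2)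
      have h2 := inLB (U ∪ W) v (fun y hy => by
        rcases Finset.mem_union.mp hy with h|h
        · exact (hU y h v (Finset.mem_union_left _ hv)).1
        · exact hWS y h v hv)
      omega
    · have h1 := outLB (U ∪ W) v (fun y hy => (hR v hv y hy).1)
      have h2 := inLB (U ∪ W) v (fun y hy => (hR v hv y hy).2)
      omega
    · have h1 := outLB (S ∪ R) v (fun y hy => (hU v hv y hy).1)
      have h2 := inLB (S ∪ R) v (fun y hy => (hU v hv y hy).2)
      omega
    · have h1 := outLB (S ∪ R) v (fun y hy => by
        rcases Finset.mem_union.mp hy with h|h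
        · exact hWS v hv y h
        · exact (hR y h v (Finset.mem_union_right _ hv)).2)
      have h2 := inLB R v (fun y hy => (hR y hy v (Finset.mem_union_right _ hv)).1)
      omega
  have part2 : ∀ u v, u ≠ v → ¬ A u v → ¬ A v u → 3 * a - 2 ≤ deg A u + deg A v := by
    intro u v _ _ _
    have := degLB u; have := degLB v; omega
  -- Part 3: matchings
  have part3 : ∀ M : Finset (V × V), IsMatching A (S ∪ R) (U ∪ W) M → M.card ≤ a - 2 := by
    intro M hM
    obtain ⟨hM1, hM2⟩ := hM
    have hsplit := Finset.card_filter_add_card_filter_not (s := M)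
      (p := fun p => p.2 ∈ W)
    have hWpart : (M.filter (fun p => p.2 ∈ W)).card ≤ R.card := by
      apply Finset.card_le_card_of_injOn (fun p => p.1)
      · intro p hp
        obtain ⟨hpM, hpW⟩ := Finset.mem_filter.mp hp
        obtain ⟨h1, _, h3⟩ := hM1 p hpM
        rcases Finset.mem_union.mp h1 with hs|hr
        · exact absurd h3 (hSW p.1 hs p.2 hpW)
        · exact hr
      · intro p hp q hq hpq
        by_contra hne
        exact (hM2 p (Finset.mem_filter.mp (Finset.mem_coe.mp hp)).1
          q (Finset.mem_filter.mp (Finset.mem_coe.mp hq)).1 hne).1 hpq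
    have hUpart : (M.filter (fun p => ¬ p.2 ∈ W)).card ≤ U.card := by
      apply Finset.card_le_card_of_injOn (fun p => p.2)
      · intro p hp
        obtain ⟨hpM, hpW⟩ := Finset.mem_filter.mp hp
        obtain ⟨_, h2, _⟩ := hM1 p hpM
        rcases Finset.mem_union.mp h2 with h|h
        · exact h
        · exact absurd h hpW
      · intro p hp q hq hpq
        by_contra hne
        exact (hM2 p (Finset.mem_filter.mp (Finset.mem_coe.mp hp)).1
          q (Finset.mem_filter.mp (Finset.mem_coe.mp hq)).1 hne).2 hpq
    omega
  refine ⟨hstrong, part2, part3, ?_⟩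
  -- Part 4: not traceable
  rintro ⟨p, hnd, hch, hall⟩
  set n := p.length with hnlen
  have hinj : ∀ i j, i < n → j < n → p.getD i r₀ = p.getD j r₀ → i = j := by
    intro i j hi hj he
    rw [p.getD_eq_get r₀ ⟨i, hi⟩, p.getD_eq_get r₀ ⟨j, hj⟩] at he
    exact congrArg Fin.val ((List.Nodup.get_inj_iff hnd).mp he)
  have hlen : ∀ (T : Finset V),
      (Finset.filter (fun i => p.getD i r₀ ∈ T) (Finset.range n)).card = T.card := by
    intro T
    apply Finset.card_bij (fun i _ => p.getD i r₀)
    · intro i hi; exact (Finset.mem_filter.mp hi).2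
    · intro i hi j hj he
      exact hinj i j (Finset.mem_range.mp (Finset.mem_filter.mp hi).1)
        (Finset.mem_range.mp (Finset.mem_filter.mp hj).1) he
    · intro t ht
      obtain ⟨⟨i, hi⟩, hget⟩ := List.mem_iff_get.mp (hall t)
      refine ⟨i, Finset.mem_filter.mpr ⟨Finset.mem_range.mpr hi, ?_⟩, ?_⟩
      · rw [p.getD_eq_get r₀ ⟨i, hi⟩, hget]; exact ht
      · rw [p.getD_eq_get r₀ ⟨i, hi⟩, hget]
  set I := Finset.filter (fun i => p.getD i r₀ ∈ S ∪ R) (Finset.range (n - 1)) with hI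
  have hIcard : 2 * b - 1 ≤ I.card := by
    have hsub : Finset.filter (fun i => p.getD i r₀ ∈ S ∪ R) (Finset.range n) ⊆
        insert (n - 1) I := by
      intro i hi
      obtain ⟨hir, hiS⟩ := Finset.mem_filter.mp hi
      have hi' := Finset.mem_range.mp hir
      rcases eq_or_ne i (n - 1) with h|h
      · exact Finset.mem_insert.mpr (Or.inl h)
      · exact Finset.mem_insert.mpr (Or.inr (Finset.mem_filter.mpr
          ⟨Finset.mem_range.mpr (by omega), hiS⟩))
    have h1 := Finset.card_le_card hsub
    have h2 := Finset.card_insert_le (n - 1) I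
    have h3 := hlen (S ∪ R)
    omega
  have hArc : ∀ i ∈ I, A (p.getD i r₀) (p.getD (i + 1) r₀) := by
    intro i hi
    obtain ⟨hir, _⟩ := Finset.mem_filter.mp hi
    have hi1 : i + 1 < n := by have := Finset.mem_range.mp hir; omega
    rw [p.getD_eq_get r₀ ⟨i, by omega⟩, p.getD_eq_get r₀ ⟨i + 1, hi1⟩]
    exact List.isChain_iff_getElem.mp hch i (by omega)
  have hSnd : ∀ i ∈ I, p.getD (i + 1) r₀ ∈ U ∪ W := by
    intro i hi
    have hiS := (Finset.mem_filter.mp hi).2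
    rcases hmem (p.getD (i + 1) r₀) with h|h|h|h
    · exact absurd (hArc i hi) (hV1ind _ hiS _ (Finset.mem_union_left _ h))
    · exact absurd (hArc i hi) (hV1ind _ hiS _ (Finset.mem_union_right _ h))
    · exact Finset.mem_union_left _ h
    · exact Finset.mem_union_right _ h
  have hIlt : ∀ i ∈ I, i < n - 1 := fun i hi =>
    Finset.mem_range.mp (Finset.mem_filter.mp hi).1
  set M := I.image (fun i => (p.getD i r₀, p.getD (i + 1) r₀)) with hM
  have hMatch : IsMatching A (S ∪ R) (U ∪ W) M := by
    constructor
    · intro q hq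
      obtain ⟨i, hi, rfl⟩ := Finset.mem_image.mp hq
      exact ⟨(Finset.mem_filter.mp hi).2, hSnd i hi, hArc i hi⟩
    · intro q hq q' hq' hne
      obtain ⟨i, hi, rfl⟩ := Finset.mem_image.mp hq
      obtain ⟨j, hj, rfl⟩ := Finset.mem_image.mp hq'
      have hiN := hIlt i hi
      have hjN := hIlt j hj
      have hij : i ≠ j := fun hh => hne (by rw [hh])
      constructor
      · intro he; exact hij (hinj i j (by omega) (by omega) he)
      · intro he
        have := hinj (i + 1) (j + 1) (by omega) (by omega) he
        omega
  have hMcard : M.card = I.card := by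
    apply Finset.card_image_of_injOn
    intro i hi j hj he
    have hiN := hIlt i (Finset.mem_coe.mp hi)
    have hjN := hIlt j (Finset.mem_coe.mp hj)
    exact hinj i j (by omega) (by omega) (congrArg Prod.fst he)
  have := part3 M hMatch
  omega
end

section
/- In the digraph $H_3$ (for even $a \ge 4$), the size of a maximum matching from $V_1$ to $V_2$ is exactly $a - 2$. -/
open Finset

variable {V : Type*}

lemma exists_injOn_aux {V : Type*} [DecidableEq V] (s t : Finset V) (h : s.card ≤ t.card) :
    ∃ f : V → V, Set.InjOn f s ∧ ∀ x ∈ s, f x ∈ t := by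
  obtain ⟨t', ht', hcard⟩ := Finset.exists_subset_card_eq h
  have e := Finset.equivOfCardEq (hcard.symm : s.card = t'.card)
  refine ⟨fun x => if hx : x ∈ s then (e ⟨x, hx⟩ : V) else x, ?_, ?_⟩
  · intro x hx y hy hxy
    simp only [Finset.mem_coe] at hx hy
    simp only [dif_pos hx, dif_pos hy] at hxy
    have := e.injective (Subtype.ext hxy)
    exact Subtype.ext_iff.mp this
  · intro x hx
    simp only [dif_pos hx]
    exact ht' (e ⟨x, hx⟩).2

theorem stmt17 {V : Type*} [DecidableEq V] [Fintype V] (A : V → V → Prop) [DecidableRel A]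
    (a : ℕ) (S R U W : Finset V) (h : IsH3 A a S R U W) :
    (∃ M : Finset (V × V), IsMatching A (S ∪ R) (U ∪ W) M ∧ M.card = a - 2) ∧
    (∀ M : Finset (V × V), IsMatching A (S ∪ R) (U ∪ W) M → M.card ≤ a - 2) := by
  obtain ⟨hev, ha4, hSR, hUW, hdisj, huniv, hScard, hWcard, hUcard, hRcard,
    hV1, hV2, hRall, hUall, hWS, hSW⟩ := h
  obtain ⟨k, hk⟩ := hev
  have hcalc : (a - 2) / 2 + (a - 2) / 2 = a - 2 := by omega
  have hScardle : U.card ≤ S.card := by rw [hScard, hUcard]; omega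
  -- disjointness facts
  have hS_U : Disjoint S U := by
    refine Finset.disjoint_left.mpr fun x hxS hxU => ?_
    exact Finset.disjoint_left.mp hdisj (Finset.mem_union_left _ hxS) (Finset.mem_union_left _ hxU)
  have hR_W : Disjoint R W := by
    refine Finset.disjoint_left.mpr fun x hxR hxW => ?_
    exact Finset.disjoint_left.mp hdisj (Finset.mem_union_right _ hxR) (Finset.mem_union_right _ hxW)
  constructor
  · -- existence
    obtain ⟨S', hS'S, hS'card⟩ := Finset.exists_subset_card_eq hScardle
    obtain ⟨f, hfinj, hfmem⟩ := exists_injOn_aux S' U (by rw [hS'card])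
    obtain ⟨g, hginj, hgmem⟩ := exists_injOn_aux R W (by rw [hRcard, hWcard]; omega)
    refine ⟨S'.image (fun x => (x, f x)) ∪ R.image (fun x => (x, g x)), ⟨?_, ?_⟩, ?_⟩
    · intro p hp
      rcases Finset.mem_union.mp hp with hp | hp
      · obtain ⟨x, hx, rfl⟩ := Finset.mem_image.mp hp
        exact ⟨Finset.mem_union_left _ (hS'S hx), Finset.mem_union_left _ (hfmem x hx),
          (hUall _ (hfmem x hx) _ (Finset.mem_union_left _ (hS'S hx))).2⟩
      · obtain ⟨x, hx, rfl⟩ := Finset.mem_image.mp hp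
        exact ⟨Finset.mem_union_right _ hx, Finset.mem_union_right _ (hgmem x hx),
          (hRall _ hx _ (Finset.mem_union_right _ (hgmem x hx))).1⟩
    · intro p hp q hq hpq
      have key : ∀ r ∈ S'.image (fun x => (x, f x)) ∪ R.image (fun x => (x, g x)),
          (r.1 ∈ S' ∧ r.2 = f r.1 ∧ r.2 ∈ U) ∨ (r.1 ∈ R ∧ r.2 = g r.1 ∧ r.2 ∈ W) := by
        intro r hr
        rcases Finset.mem_union.mp hr with hr | hr
        · obtain ⟨x, hx, rfl⟩ := Finset.mem_image.mp hr
          exact Or.inl ⟨hx, rfl, hfmem x hx⟩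
        · obtain ⟨x, hx, rfl⟩ := Finset.mem_image.mp hr
          exact Or.inr ⟨hx, rfl, hgmem x hx⟩
      rcases key p hp with ⟨h1, h2, h3⟩ | ⟨h1, h2, h3⟩ <;>
        rcases key q hq with ⟨h1', h2', h3'⟩ | ⟨h1', h2', h3'⟩
      · constructor
        · intro he; apply hpq; rw [Prod.ext_iff]; exact ⟨he, by rw [h2, h2', he]⟩
        · intro he; apply hpq; rw [Prod.ext_iff]
          have := hfinj h1 h1' (by rw [← h2, ← h2', he])
          exact ⟨this, he⟩
      · exact ⟨fun he => Finset.disjoint_left.mp hSR (hS'S h1) (he ▸ h1'),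
          fun he => Finset.disjoint_left.mp hUW h3 (he ▸ h3')⟩
      · exact ⟨fun he => Finset.disjoint_left.mp hSR (hS'S h1') (he ▸ h1),
          fun he => Finset.disjoint_left.mp hUW h3' (he ▸ h3)⟩
      · constructor
        · intro he; apply hpq; rw [Prod.ext_iff]; exact ⟨he, by rw [h2, h2', he]⟩
        · intro he; apply hpq; rw [Prod.ext_iff]
          have := hginj h1 h1' (by rw [← h2, ← h2', he])
          exact ⟨this, he⟩
    · rw [Finset.card_union_of_disjoint, Finset.card_image_of_injOn,
        Finset.card_image_of_injOn]
      · rw [hS'card, hUcard, hRcard]; omega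
      · intro x hx y hy hxy; exact (Prod.ext_iff.mp hxy).1
      · intro x hx y hy hxy; exact (Prod.ext_iff.mp hxy).1
      · refine Finset.disjoint_left.mpr fun p hp hq => ?_
        obtain ⟨x, hx, rfl⟩ := Finset.mem_image.mp hp
        obtain ⟨y, hy, he⟩ := Finset.mem_image.mp hq
        have : y = x := (Prod.ext_iff.mp he).1
        subst this
        exact Finset.disjoint_left.mp hSR (hS'S hx) hy
  · -- upper bound
    intro M ⟨hM1, hM2⟩
    have hsplit : M = M.filter (fun p => p.2 ∈ U) ∪ M.filter (fun p => p.2 ∈ W) := by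
      rw [← Finset.filter_or]
      symm
      rw [Finset.filter_eq_self]
      intro p hp
      rcases Finset.mem_union.mp (hM1 p hp).2.1 with h | h
      · exact Or.inl h
      · exact Or.inr h
    have hU' : (M.filter (fun p => p.2 ∈ U)).card ≤ U.card := by
      apply Finset.card_le_card_of_injOn (fun p => p.2)
      · intro p hp; exact (Finset.mem_filter.mp hp).2
      · intro p hp q hq he
        simp only [Finset.coe_filter, Set.mem_setOf_eq] at hp hq
        by_contra hne
        exact (hM2 p hp.1 q hq.1 hne).2 he
    have hW' : (M.filter (fun p => p.2 ∈ W)).card ≤ R.card := by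
      apply Finset.card_le_card_of_injOn (fun p => p.1)
      · intro p hp
        obtain ⟨hpM, hpW⟩ := Finset.mem_filter.mp hp
        obtain ⟨hp1, _, hpA⟩ := hM1 p hpM
        rcases Finset.mem_union.mp hp1 with h | h
        · exact absurd hpA (hSW _ h _ hpW)
        · exact h
      · intro p hp q hq he
        simp only [Finset.coe_filter, Set.mem_setOf_eq] at hp hq
        by_contra hne
        exact (hM2 p hp.1 q hq.1 hne).1 he
    calc M.card ≤ (M.filter (fun p => p.2 ∈ U)).card + (M.filter (fun p => p.2 ∈ W)).card := by
          conv_lhs => rw [hsplit]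
          exact Finset.card_union_le _ _
      _ ≤ U.card + R.card := Nat.add_le_add hU' hW'
      _ = a - 2 := by rw [hUcard, hRcard]; omega
end
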